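/- arXiv:1809.05016 — 5 statements merged into one kernel-verified Lean document; each statement's English description precedes it below -/
import Mathlib

section
/- For every d ≥ 1, the matrix over ℚ whose rows are indexed by the partitions ν of 2d all of whose parts are odd, whose columns are indexed by the partitions ρ of 2d all of whose parts are even, and whose (ν, ρ)-entry is C(ν, ρ), has rank equal to p(d), the number of partitions of d; that is, the matrix has full column rank. -/
open scoped BigOperators

noncomputable section

/-- `C(ν, ρ)`: the number of functions `f` from the (indexed) parts of `ν` to the
(indexed) parts of `ρ` such that for every part of `ρ` the parts of `ν` mapped to it
sum to it. -/
def Cfun (ν ρ : Multiset ℕ) : ℕ :=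
  Nat.card {f : Fin ν.toList.length → Fin ρ.toList.length //
    ∀ j, (∑ i ∈ Finset.univ.filter fun i => f i = j, ν.toList.get i) = ρ.toList.get j}

/-- The matrix `(C(ν, ρ))` with rows the odd-part partitions of `2d` and columns the
even-part partitions of `2d`, with entries in `ℚ`. -/
def Cmatrix (d : ℕ) :
    Matrix {p : Nat.Partition (2 * d) // ∀ x ∈ p.parts, Odd x}
      {p : Nat.Partition (2 * d) // ∀ x ∈ p.parts, Even x} ℚ :=
  fun νp ρp => (Cfun νp.1.parts ρp.1.parts : ℚ)

namespace CP

open Multiset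

/-- helper: sum over Fin of list gets -/
lemma sum_fin_get {M : Type*} [AddCommMonoid M] (l : List ℕ) (g : ℕ → M) :
    ∑ i : Fin l.length, g (l.get i) = (l.map g).sum := by
  induction l with
  | nil => simp
  | cons a t ih =>
      rw [List.map_cons, List.sum_cons, ← ih]
      simpa using Fin.sum_univ_succ (fun i : Fin (t.length + 1) => g ((a :: t).get i))

lemma sum_fin_singleton (l : List ℕ) (g : ℕ → ℕ) :
    ∑ i : Fin l.length, ({g (l.get i)} : Multiset ℕ) = (↑l : Multiset ℕ).map g := by
  induction l with
  | nil => simp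
  | cons a t ih =>
      rw [show ((↑(a :: t) : Multiset ℕ)) = a ::ₘ ↑t from rfl, Multiset.map_cons, ← ih,
        ← Multiset.singleton_add]
      simpa using Fin.sum_univ_succ
        (fun i : Fin (t.length + 1) => ({g ((a :: t).get i)} : Multiset ℕ))

lemma sum_msum {ι : Type*} (s : Finset ι) (g : ι → Multiset ℕ) :
    (∑ i ∈ s, g i).sum = ∑ i ∈ s, (g i).sum := by
  classical
  induction s using Finset.induction with
  | empty => simp
  | insert _ _ h ih => simp [Finset.sum_insert h, ih]

lemma map_msum {ι : Type*} (s : Finset ι) (g : ι → Multiset ℕ) (h : ℕ → ℕ) :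
    (∑ i ∈ s, g i).map h = ∑ i ∈ s, (g i).map h := by
  classical
  induction s using Finset.induction with
  | empty => simp
  | insert _ _ hins ih => simp [Finset.sum_insert hins, ih]

/-- existence of an assembling function from a multiset decomposition -/
lemma exists_f {n : ℕ} (l : List ℕ) (M : Fin n → Multiset ℕ)
    (h : ∑ j, M j = (↑l : Multiset ℕ)) :
    ∃ f : Fin l.length → Fin n,
      ∀ j, (∑ i : Fin l.length, if f i = j then ({l.get i} : Multiset ℕ) else 0) = M j := by
  induction l generalizing M with
  | nil =>
      refine ⟨fun i => i.elim0, fun j => ?_⟩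
      have : ∀ j' ∈ Finset.univ, M j' = 0 := by
        rw [← Finset.sum_eq_zero_iff]
        simpa using h
      simpa using (this j (Finset.mem_univ j)).symm
  | cons a t ih =>
      have ha : a ∈ ∑ j, M j := by rw [h]; simp
      obtain ⟨j0, -, hj0⟩ := Multiset.mem_sum.1 ha
      set M' : Fin n → Multiset ℕ := Function.update M j0 ((M j0).erase a) with hM'
      have hsum' : ∑ j, M' j = (↑t : Multiset ℕ) := by
        have h1 : ∑ j, M' j = (M j0).erase a + ∑ j ∈ Finset.univ \ {j0}, M j :=
          Finset.sum_update_of_mem (Finset.mem_univ j0) _ _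
        have h2 : ∑ j, M j = M j0 + ∑ j ∈ Finset.univ \ {j0}, M j := by
          rw [Finset.sdiff_singleton_eq_erase, Finset.add_sum_erase _ M (Finset.mem_univ j0)]
        have h3 : M j0 = a ::ₘ (M j0).erase a := (Multiset.cons_erase hj0).symm
        have : a ::ₘ (∑ j, M' j) = a ::ₘ (↑t : Multiset ℕ) := by
          rw [h1, ← Multiset.singleton_add, ← add_assoc, Multiset.singleton_add, ← h3, ← h2, h]
          rfl
        exact (Multiset.cons_inj_right a).1 this
      obtain ⟨f', hf'⟩ := ih M' hsum'
      refine ⟨Fin.cases j0 f', fun j => ?_⟩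
      simp only [List.length_cons]
      rw [Fin.sum_univ_succ]
      simp only [Fin.cases_zero, Fin.cases_succ, List.get]
      have hrest : (∑ i : Fin t.length,
          if f' i = j then ({t.get i} : Multiset ℕ) else 0) = M' j := hf' j
      by_cases hj : j0 = j
      · subst hj
        erw [if_pos rfl, hrest, hM', Function.update_self, Multiset.singleton_add,
          Multiset.cons_erase hj0]
      · erw [if_neg hj, hrest, hM', Function.update_of_ne (by simpa using fun hc => hj hc.symm) _ _]
        · simp

/-- parity: a multiset of odd numbers has sum congruent to its cardinality mod 2 -/
lemma parity_aux (w : Multiset ℕ) (hodd : ∀ x ∈ w, Odd x) : (w.sum + Multiset.card w) % 2 = 0 := by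
  induction w using Multiset.induction_on with
  | empty => simp
  | cons a t ih =>
      have ha : Odd a := hodd a (Multiset.mem_cons_self a t)
      have ht := ih (fun x hx => hodd x (Multiset.mem_cons_of_mem hx))
      obtain ⟨c, hc⟩ := ha
      simp only [Multiset.sum_cons, Multiset.card_cons]
      omega

/-- the per-block inequality -/
lemma block (w : Multiset ℕ) (hodd : ∀ x ∈ w, Odd x) (s k : ℕ) (hs : w.sum = 2 * s)
    (hs0 : 0 < s) (hk : 1 ≤ k) :
    2 * min s k ≤ (w.map (fun x => min x (2 * k - 1))).sum := by
  rcases le_or_gt s k with hle | hlt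
  · rw [min_eq_left hle]
    have hall : ∀ x ∈ w, min x (2 * k - 1) = x := by
      intro x hx
      have hxle : x ≤ w.sum := Multiset.single_le_sum (fun y _ => Nat.zero_le y) x hx
      obtain ⟨c, hc⟩ := hodd x hx
      omega
    rw [Multiset.map_congr rfl hall, Multiset.map_id', hs]
  · rw [min_eq_right hlt.le]
    by_cases hex : ∃ x ∈ w, 2 * k - 1 ≤ x
    · obtain ⟨x, hx, hxk⟩ := hex
      have hcard2 : 2 ≤ Multiset.card w := by
        have h1 := parity_aux w hodd
        have h2 : w.sum ≠ 0 := by omega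
        have h3 : Multiset.card w ≠ 0 := by
          intro hc
          rw [Multiset.card_eq_zero.1 hc] at h2
          simp at h2
        omega
      have hy : ∃ y, y ∈ w.erase x := by
        have hcarde : Multiset.card (w.erase x) = Multiset.card w - 1 := by
          rw [Multiset.card_erase_of_mem hx]; rfl
        rw [← Multiset.card_pos_iff_exists_mem, hcarde]
        omega
      obtain ⟨y, hy⟩ := hy
      have hw1 : w = x ::ₘ w.erase x := (Multiset.cons_erase hx).symm
      have hw2 : w.erase x = y ::ₘ (w.erase x).erase y := (Multiset.cons_erase hy).symm
      have hy1 : 1 ≤ y := (hodd y (Multiset.mem_of_mem_erase hy)).pos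
      calc 2 * k = (2 * k - 1) + 1 := by omega
      _ ≤ min x (2 * k - 1) + min y (2 * k - 1) := by
          have h1 : min x (2 * k - 1) = 2 * k - 1 := min_eq_right hxk
          have h2 : 1 ≤ min y (2 * k - 1) := le_min hy1 (by omega)
          rw [h1]
          exact Nat.add_le_add_left h2 _
      _ ≤ min x (2 * k - 1) + (min y (2 * k - 1) +
            (((w.erase x).erase y).map (fun x => min x (2 * k - 1))).sum) :=
          Nat.add_le_add_left (Nat.le_add_right _ _) _
      _ = (w.map (fun x => min x (2 * k - 1))).sum := by
          conv_rhs => rw [hw1, hw2]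
          simp [Multiset.map_cons, Multiset.sum_cons]
    · push_neg at hex
      have hall : ∀ x ∈ w, min x (2 * k - 1) = x := fun x hx => min_eq_left (hex x hx).le
      rw [Multiset.map_congr rfl hall, Multiset.map_id', hs]
      omega

variable {d : ℕ}

lemma sum_nu_aux (s : Multiset ℕ) (hp : ∀ x ∈ s, 0 < x) :
    (s.map (fun a => 2 * a - 1)).sum + Multiset.card s = (s.map (fun a => 2 * a)).sum := by
  induction s using Multiset.induction_on with
  | empty => simp
  | cons a t ih =>
      have ha := hp a (Multiset.mem_cons_self a t)
      have ht := ih (fun x hx => hp x (Multiset.mem_cons_of_mem hx))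
      simp only [Multiset.map_cons, Multiset.sum_cons, Multiset.card_cons]
      omega

lemma sum_map_two (s : Multiset ℕ) : (s.map (fun a => 2 * a)).sum = 2 * s.sum := by
  induction s using Multiset.induction_on with
  | empty => simp
  | cons a t ih => simp only [Multiset.map_cons, Multiset.sum_cons, ih]; ring

/-- double each part -/
def two (lam : Nat.Partition d) : Nat.Partition (2 * d) where
  parts := lam.parts.map (fun a => 2 * a)
  parts_pos := by
    intro i hi
    obtain ⟨a, ha, rfl⟩ := Multiset.mem_map.1 hi
    have := lam.parts_pos ha
    omega
  parts_sum := by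
    rw [sum_map_two, lam.parts_sum]

lemma two_even (lam : Nat.Partition d) : ∀ x ∈ (two lam).parts, Even x := by
  intro x hx
  obtain ⟨a, _, rfl⟩ := Multiset.mem_map.1 hx
  exact ⟨a, by ring⟩

/-- replace each part `a` by `2*a - 1` and a `1` -/
def nu (lam : Nat.Partition d) : Nat.Partition (2 * d) where
  parts := lam.parts.map (fun a => 2 * a - 1) + Multiset.replicate (Multiset.card lam.parts) 1
  parts_pos := by
    intro i hi
    rcases Multiset.mem_add.1 hi with h | h
    · obtain ⟨a, ha, rfl⟩ := Multiset.mem_map.1 h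
      have := lam.parts_pos ha
      omega
    · rw [Multiset.eq_of_mem_replicate h]
      omega
  parts_sum := by
    rw [Multiset.sum_add, Multiset.sum_replicate, smul_eq_mul, mul_one]
    rw [sum_nu_aux lam.parts (fun x hx => lam.parts_pos hx), sum_map_two, lam.parts_sum]

lemma nu_odd (lam : Nat.Partition d) : ∀ x ∈ (nu lam).parts, Odd x := by
  intro x hx
  rcases Multiset.mem_add.1 hx with h | h
  · obtain ⟨a, ha, rfl⟩ := Multiset.mem_map.1 h
    have := lam.parts_pos ha
    exact ⟨a - 1, by omega⟩
  · rw [Multiset.eq_of_mem_replicate h]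
    exact odd_one

lemma minhelp (a k : ℕ) (ha : 1 ≤ a) (hk : 1 ≤ k) :
    min (2 * a - 1) (2 * k - 1) = 2 * min a k - 1 := by
  rcases le_total a k with h | h
  · rw [min_eq_left (by omega : 2 * a - 1 ≤ 2 * k - 1), min_eq_left h]
  · rw [min_eq_right (by omega : 2 * k - 1 ≤ 2 * a - 1), min_eq_right h]

lemma sum_pred (s : Multiset ℕ) (f : ℕ → ℕ) (hf : ∀ x ∈ s, 1 ≤ f x) :
    (s.map (fun a => 2 * f a - 1)).sum + Multiset.card s = 2 * (s.map f).sum := by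
  induction s using Multiset.induction_on with
  | empty => simp
  | cons a t ih =>
      have ha := hf a (Multiset.mem_cons_self a t)
      have ht := ih (fun x hx => hf x (Multiset.mem_cons_of_mem hx))
      simp only [Multiset.map_cons, Multiset.sum_cons, Multiset.card_cons]
      omega

lemma sum_fin_singleton' (l : List ℕ) :
    ∑ i : Fin l.length, ({l.get i} : Multiset ℕ) = (↑l : Multiset ℕ) := by
  have := sum_fin_singleton l id
  simpa using this

lemma cfun_ne_zero_iff (ν ρ : Multiset ℕ) :
    Cfun ν ρ ≠ 0 ↔ Nonempty {f : Fin ν.toList.length → Fin ρ.toList.length //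
      ∀ j, (∑ i ∈ Finset.univ.filter fun i => f i = j, ν.toList.get i) = ρ.toList.get j} := by
  rw [Cfun, ne_eq, Nat.card_eq_zero]
  constructor
  · intro h
    by_contra hne
    exact h (Or.inl (not_nonempty_iff.1 hne))
  · intro h hc
    rcases hc with hc | hc
    · exact (not_nonempty_iff.2 hc) h
    · exact hc.not_finite (Subtype.finite)

lemma diag_ne_zero (lam : Nat.Partition d) :
    Cfun (nu lam).parts (two lam).parts ≠ 0 := by
  rw [cfun_ne_zero_iff]
  set lν := (nu lam).parts.toList with hlν
  set lρ := (two lam).parts.toList with hlρ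
  have hgetmem : ∀ j : Fin lρ.length, lρ.get j ∈ (two lam).parts := by
    intro j
    rw [← Multiset.mem_toList]
    exact List.get_mem _ _
  have hgetpos : ∀ j : Fin lρ.length, 1 ≤ lρ.get j := fun j => (two lam).parts_pos (hgetmem j)
  set M : Fin lρ.length → Multiset ℕ := fun j => {lρ.get j - 1} + {1} with hM
  have hsum : ∑ j, M j = (↑lν : Multiset ℕ) := by
    rw [hM]
    rw [Finset.sum_add_distrib, sum_fin_singleton lρ (fun x => x - 1)]
    have h2 : (∑ _j : Fin lρ.length, ({1} : Multiset ℕ)) = Multiset.replicate lρ.length 1 := by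
      rw [Finset.sum_const, Multiset.nsmul_singleton]
      simp
    rw [h2]
    rw [hlν, hlρ, Multiset.coe_toList, Multiset.coe_toList]
    show Multiset.map (fun x => x - 1) (two lam).parts + _ = (nu lam).parts
    have h3 : Multiset.map (fun x => x - 1) (two lam).parts
        = Multiset.map (fun a => 2 * a - 1) lam.parts := by
      show Multiset.map (fun x => x - 1) (Multiset.map (fun a => 2 * a) lam.parts) = _
      rw [Multiset.map_map]
      rfl
    have h4 : (two lam).parts.toList.length = Multiset.card lam.parts := by
      rw [Multiset.length_toList]
      show Multiset.card (Multiset.map _ _) = _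
      rw [Multiset.card_map]
    rw [h3, h4]
    rfl
  obtain ⟨f, hf⟩ := exists_f lν M hsum
  refine ⟨⟨f, fun j => ?_⟩⟩
  have h5 := congrArg Multiset.sum (hf j)
  rw [sum_msum] at h5
  simp only [apply_ite Multiset.sum, Multiset.sum_singleton, Multiset.sum_zero] at h5
  rw [Finset.sum_filter]
  rw [h5, hM]
  simp only [Multiset.sum_add, Multiset.sum_singleton]
  have := hgetpos j
  omega

lemma sum_fin_get_multiset (s : Multiset ℕ) (g : ℕ → ℕ) :
    ∑ i : Fin s.toList.length, g (s.toList.get i) = (s.map g).sum := by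
  rw [sum_fin_get]
  conv_rhs => rw [← Multiset.coe_toList s]
  rw [Multiset.map_coe, Multiset.sum_coe]

lemma key (lam mu : Nat.Partition d)
    (h : Cfun (nu lam).parts (two mu).parts ≠ 0) (k : ℕ) :
    (mu.parts.map (fun a => min a k)).sum ≤ (lam.parts.map (fun a => min a k)).sum := by
  rcases Nat.eq_zero_or_pos k with rfl | hk
  · simp
  set lν := (nu lam).parts.toList with hlν
  set lρ := (two mu).parts.toList with hlρ
  obtain ⟨⟨f, hf⟩⟩ := (cfun_ne_zero_iff (nu lam).parts (two mu).parts).1 h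
  set m : Fin lρ.length → Multiset ℕ :=
    fun j => ∑ i : Fin lν.length, if f i = j then ({lν.get i} : Multiset ℕ) else 0 with hm
  have h1 : ∑ j, m j = (nu lam).parts := by
    rw [hm, Finset.sum_comm]
    have : ∀ i : Fin lν.length,
        (∑ j, if f i = j then ({lν.get i} : Multiset ℕ) else 0) = {lν.get i} := by
      intro i
      rw [Finset.sum_ite_eq]
      simp
    rw [Finset.sum_congr rfl (fun i _ => this i), sum_fin_singleton' lν, hlν,
      Multiset.coe_toList]
  have h2 : ∀ j, (m j).sum = lρ.get j := by
    intro j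
    rw [hm]
    rw [sum_msum]
    simp only [apply_ite Multiset.sum, Multiset.sum_singleton, Multiset.sum_zero]
    rw [← Finset.sum_filter]
    exact hf j
  have h3 : ∀ j, ∀ x ∈ m j, Odd x := by
    intro j x hx
    have hle : m j ≤ ∑ j', m j' :=
      Finset.single_le_sum (f := m) (fun i _ => Multiset.zero_le (m i)) (Finset.mem_univ j)
    exact nu_odd lam x (h1 ▸ Multiset.mem_of_le hle hx)
  have hgetmem : ∀ j : Fin lρ.length, lρ.get j ∈ (two mu).parts := by
    intro j
    rw [← Multiset.mem_toList]
    exact List.get_mem _ _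
  have hb1 : ∀ j : Fin lρ.length, 2 * (lρ.get j / 2) = lρ.get j := by
    intro j
    obtain ⟨a, _, ha2⟩ := Multiset.mem_map.1 (hgetmem j)
    omega
  have hb2 : ∀ j : Fin lρ.length, lρ.get j / 2 ∈ mu.parts := by
    intro j
    obtain ⟨a, ha, ha2⟩ := Multiset.mem_map.1 (hgetmem j)
    have : lρ.get j / 2 = a := by omega
    rwa [this]
  have hblock : ∀ j : Fin lρ.length, 2 * min (lρ.get j / 2) k ≤
      ((m j).map (fun x => min x (2 * k - 1))).sum := by
    intro j
    exact block (m j) (h3 j) _ k (by rw [h2 j, hb1 j]) (mu.parts_pos (hb2 j)) hk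
  have htotal : (∑ j : Fin lρ.length, 2 * min (lρ.get j / 2) k)
      ≤ ∑ j : Fin lρ.length, ((m j).map (fun x => min x (2 * k - 1))).sum :=
    Finset.sum_le_sum (fun j _ => hblock j)
  rw [← Finset.mul_sum] at htotal
  have hL : ∑ j : Fin lρ.length, min (lρ.get j / 2) k
      = (mu.parts.map (fun a => min a k)).sum := by
    rw [hlρ, sum_fin_get_multiset (two mu).parts (fun x => min (x / 2) k)]
    show ((Multiset.map (fun a => 2 * a) mu.parts).map (fun x => min (x / 2) k)).sum = _
    rw [Multiset.map_map]
    refine congrArg _ (Multiset.map_congr rfl ?_)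
    intro x _
    show min (2 * x / 2) k = min x k
    congr 1
    omega
  have hR : (∑ j, ((m j).map (fun x => min x (2 * k - 1))).sum)
      = 2 * (lam.parts.map (fun a => min a k)).sum := by
    rw [← sum_msum, ← map_msum, h1]
    show ((Multiset.map (fun a => 2 * a - 1) lam.parts
        + Multiset.replicate (Multiset.card lam.parts) 1).map (fun x => min x (2 * k - 1))).sum = _
    rw [Multiset.map_add, Multiset.sum_add, Multiset.map_replicate, Multiset.map_map]
    have e1 : min 1 (2 * k - 1) = 1 := min_eq_left (by omega)
    have e2 : Multiset.map ((fun x => min x (2 * k - 1)) ∘ fun a => 2 * a - 1) lam.parts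
        = Multiset.map (fun a => 2 * min a k - 1) lam.parts := by
      refine Multiset.map_congr rfl ?_
      intro x hx
      exact minhelp x k (lam.parts_pos hx) hk
    rw [e1, e2, Multiset.sum_replicate, smul_eq_mul, mul_one]
    exact sum_pred lam.parts (fun a => min a k)
      (fun x hx => le_min (lam.parts_pos hx) hk)
  rw [hL, hR] at htotal
  omega

lemma step_min (s : Multiset ℕ) (k : ℕ) :
    (s.map (fun a => min a (k + 1))).sum
      = (s.map (fun a => min a k)).sum + s.countP (fun a => k + 1 ≤ a) := by
  induction s using Multiset.induction_on with
  | empty => simp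
  | cons a t ih =>
      simp only [Multiset.map_cons, Multiset.sum_cons, Multiset.countP_cons, ih]
      have hsplit : min a (k + 1) = min a k + (if k + 1 ≤ a then 1 else 0) := by
        rcases le_or_gt a k with h | h
        · rw [min_eq_left (by omega), min_eq_left h, if_neg (by omega)]
          omega
        · rw [min_eq_right (by omega), min_eq_right (by omega), if_pos (by omega)]
      omega

lemma countP_split (s : Multiset ℕ) (v : ℕ) :
    s.countP (fun a => v ≤ a) = s.countP (fun a => v + 1 ≤ a) + s.count v := by
  induction s using Multiset.induction_on with
  | empty => simp
  | cons a t ih =>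
      simp only [Multiset.countP_cons, Multiset.count_cons, ih]
      split_ifs <;> omega

lemma eq_of_N (lam mu : Nat.Partition d)
    (h : ∀ k, (lam.parts.map (fun a => min a k)).sum = (mu.parts.map (fun a => min a k)).sum) :
    lam = mu := by
  have hcount : ∀ k, lam.parts.countP (fun a => k + 1 ≤ a)
      = mu.parts.countP (fun a => k + 1 ≤ a) := by
    intro k
    have h1 := step_min lam.parts k
    have h2 := step_min mu.parts k
    have h3 := h k
    have h4 := h (k + 1)
    omega
  refine Nat.Partition.ext ?_
  refine Multiset.ext.2 ?_
  rintro (_ | v)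
  · rw [Multiset.count_eq_zero.2 (fun hc => by exact absurd (lam.parts_pos hc) (by omega)),
      Multiset.count_eq_zero.2 (fun hc => by exact absurd (mu.parts_pos hc) (by omega))]
  · have s1 := countP_split lam.parts (v + 1)
    have s2 := countP_split mu.parts (v + 1)
    have c1 := hcount v
    have c2 := hcount (v + 1)
    omega

instance pOrder : PartialOrder (Nat.Partition d) where
  le lam mu := ∀ k, (mu.parts.map (fun a => min a k)).sum ≤ (lam.parts.map (fun a => min a k)).sum
  le_refl := fun lam k => le_rfl
  le_trans := fun a b c hab hbc k => (hbc k).trans (hab k)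
  le_antisymm := fun a b hab hba => eq_of_N a b (fun k => le_antisymm (hba k) (hab k))

lemma le_of_cfun_ne_zero (lam mu : Nat.Partition d)
    (h : Cfun (nu lam).parts (two mu).parts ≠ 0) : lam ≤ mu :=
  fun k => key lam mu h k

lemma rank_submatrix_le' {m n p : Type*} [Fintype m] [Fintype n] [Fintype p]
    (A : Matrix m n ℚ) (f : p → m) (e : p ≃ n) :
    (A.submatrix f e).rank ≤ A.rank := by
  rw [Matrix.rank, Matrix.rank, Matrix.mulVecLin_submatrix, LinearMap.range_comp,
    LinearMap.range_comp,
    show LinearMap.funLeft ℚ ℚ e.symm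
      = ((LinearEquiv.funCongrLeft ℚ ℚ e.symm : (p → ℚ) ≃ₗ[ℚ] (n → ℚ)) :
          (p → ℚ) →ₗ[ℚ] (n → ℚ)) from rfl,
    LinearEquiv.range, Submodule.map_top]
  exact Submodule.finrank_map_le _ _

/-- the bijection between partitions of `d` and even partitions of `2 * d` -/
def evenEquiv (d : ℕ) :
    Nat.Partition d ≃ {p : Nat.Partition (2 * d) // ∀ x ∈ p.parts, Even x} where
  toFun lam := ⟨two lam, two_even lam⟩
  invFun p :=
    { parts := p.1.parts.map (fun x => x / 2)
      parts_pos := by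
        intro i hi
        obtain ⟨x, hx, rfl⟩ := Multiset.mem_map.1 hi
        obtain ⟨c, hc⟩ := p.2 x hx
        have := p.1.parts_pos hx
        omega
      parts_sum := by
        have h1 : Multiset.map (fun a => 2 * a) (Multiset.map (fun x => x / 2) p.1.parts)
            = p.1.parts := by
          rw [Multiset.map_map]
          rw [Multiset.map_congr rfl (fun x hx => ?_), Multiset.map_id']
          obtain ⟨c, hc⟩ := p.2 x hx
          show 2 * (x / 2) = x
          omega
        have h2 := sum_map_two (Multiset.map (fun x => x / 2) p.1.parts)
        rw [h1, p.1.parts_sum] at h2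
        omega }
  left_inv lam := by
    refine Nat.Partition.ext ?_
    show Multiset.map (fun x => x / 2) (Multiset.map (fun a => 2 * a) lam.parts) = lam.parts
    rw [Multiset.map_map]
    rw [Multiset.map_congr rfl (fun x _ => ?_), Multiset.map_id']
    show 2 * x / 2 = x
    omega
  right_inv p := by
    refine Subtype.ext (Nat.Partition.ext ?_)
    show Multiset.map (fun a => 2 * a) (Multiset.map (fun x => x / 2) p.1.parts) = p.1.parts
    rw [Multiset.map_map]
    rw [Multiset.map_congr rfl (fun x hx => ?_), Multiset.map_id']
    obtain ⟨c, hc⟩ := p.2 x hx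
    show 2 * (x / 2) = x
    omega

end CP


open CP in
/-- For every `d ≥ 1`, the matrix `(C(ν, ρ))_{ν odd, ρ even}` of
partitions of `2d` has rank `p(d)`, the number of partitions of `d`; i.e. it has full
column rank. -/
theorem Cmatrix_rank (d : ℕ) (hd : 1 ≤ d) :
    (Cmatrix d).rank = Fintype.card (Nat.Partition d) := by
  classical
  refine le_antisymm ?_ ?_
  · calc (Cmatrix d).rank
        ≤ Fintype.card {p : Nat.Partition (2 * d) // ∀ x ∈ p.parts, Even x} :=
          Matrix.rank_le_card_width _
      _ = Fintype.card (Nat.Partition d) := (Fintype.card_congr (evenEquiv d)).symm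
  · set E := LinearExtension (Nat.Partition d) with hE
    let g : E ≃ Nat.Partition d := ⟨fun x => x, fun x => toLinearExtension x,
      fun _ => rfl, fun _ => rfl⟩
    letI : Fintype E := Fintype.ofEquiv _ g.symm
    letI : DecidableEq E := fun a b => decidable_of_iff (g a = g b) g.injective.eq_iff
    let C : Matrix E E ℚ :=
      (Cmatrix d).submatrix (fun i => ⟨nu (g i), nu_odd (g i)⟩) (g.trans (evenEquiv d))
    have hCij : ∀ i j : E, C i j = ((Cfun (nu (g i)).parts (two (g j)).parts : ℕ) : ℚ) :=
      fun i j => rfl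
    have htri : C.BlockTriangular id := by
      intro i j hji
      by_contra hc
      have hne : Cfun (nu (g i)).parts (two (g j)).parts ≠ 0 := by
        intro h0
        apply hc
        rw [hCij i j, h0, Nat.cast_zero]
      have hle : g i ≤ g j := le_of_cfun_ne_zero (g i) (g j) hne
      have hmon : toLinearExtension (g i) ≤ toLinearExtension (g j) :=
        toLinearExtension.monotone hle
      exact absurd hmon (not_le.2 hji)
    have hdet : C.det ≠ 0 := by
      rw [Matrix.det_of_upperTriangular htri]
      refine Finset.prod_ne_zero_iff.2 (fun i _ => ?_)
      rw [hCij i i]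
      exact Nat.cast_ne_zero.2 (diag_ne_zero (g i))
    have hrankC : C.rank = Fintype.card (Nat.Partition d) := by
      rw [Matrix.rank_of_isUnit C ((Matrix.isUnit_iff_isUnit_det C).2 (Ne.isUnit hdet))]
      exact Fintype.card_congr g
    calc Fintype.card (Nat.Partition d) = C.rank := hrankC.symm
      _ ≤ (Cmatrix d).rank := rank_submatrix_le' _ _ _

end
end

section
/- Let ρ = (ρ₁ ≥ ρ₂ ≥ … ≥ ρ_m) be a partition of 2d all of whose parts are even, and let ν(ρ) be the partition of 2d whose parts are ρ₁ − 1, 1, ρ₂ − 1, 1, …, ρ_m − 1, 1 (all of which are odd). Then C(ν(ρ), ρ) ≠ 0, and for every partition ρ' of 2d all of whose parts are even, C(ν(ρ), ρ') ≠ 0 implies that ρ' is greater than or equal to ρ in the lexicographic order on partitions (parts listed in decreasing order, comparing first parts, then second parts, and so on). -/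
open scoped BigOperators

noncomputable section

/-- The parts of a multiset listed in decreasing order. -/
def descList (m : Multiset ℕ) : List ℕ :=
  (m.sort (· ≤ ·)).reverse

/-- The partition `ν(ρ)` with parts `ρ₁ - 1, 1, ρ₂ - 1, 1, …, ρ_m - 1, 1`. -/
def nuOf (ρ : Multiset ℕ) : Multiset ℕ :=
  ρ.map (· - 1) + Multiset.replicate (Multiset.card ρ) 1

/-! ### Auxiliary lemmas -/

lemma fin_sum_get {M : Type*} [AddCommMonoid M] (l : List ℕ) (g : ℕ → M) :
    ∑ i : Fin l.length, g (l.get i) = (((l : Multiset ℕ)).map g).sum := by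
  rw [← List.sum_ofFn]
  have h1 : (List.ofFn fun i => g (l.get i)) = l.map g := by
    rw [show (fun i => g (l.get i)) = g ∘ l.get from rfl, ← List.map_ofFn, List.ofFn_get]
  rw [h1, Multiset.map_coe, Multiset.sum_coe]

lemma sum_singletons (l : List ℕ) :
    (∑ i : Fin l.length, ({l.get i} : Multiset ℕ)) = (l : Multiset ℕ) := by
  rw [fin_sum_get l (fun x => ({x} : Multiset ℕ)), Multiset.sum_map_singleton]

/-- From a decomposition of the multiset of a list into blocks, produce an index
assignment whose fibers sum to the block sums. -/
lemma exists_fun_of_decomp : ∀ (l : List ℕ) (m : ℕ) (B : Fin m → Multiset ℕ),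
    (l : Multiset ℕ) = ∑ j, B j →
    ∃ f : Fin l.length → Fin m,
      ∀ j, (∑ i : Fin l.length, if f i = j then l.get i else 0) = (B j).sum := by
  intro l
  induction l with
  | nil =>
    intro m B h
    refine ⟨Fin.elim0, fun j => ?_⟩
    have hB : B j = 0 := by
      have h0 : (∑ j, B j) = 0 := by simpa using h.symm
      exact (Finset.sum_eq_zero_iff.mp h0) j (Finset.mem_univ j)
    simp [hB]
  | cons a t ih =>
    intro m B h
    have ha : a ∈ ∑ j, B j := by rw [← h]; simp
    obtain ⟨j₀, -, haj⟩ := Multiset.mem_sum.1 ha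
    have h2 : (∑ j, B j) = B j₀ + ∑ j ∈ Finset.univ.erase j₀, B j :=
      (Finset.add_sum_erase _ B (Finset.mem_univ j₀)).symm
    have ht : (t : Multiset ℕ) =
        ∑ j, Function.update B j₀ ((B j₀).erase a) j := by
      have h3 : (∑ j, Function.update B j₀ ((B j₀).erase a) j)
          = (B j₀).erase a + ∑ j ∈ Finset.univ \ {j₀}, B j := by
        rw [Finset.sum_update_of_mem (Finset.mem_univ j₀)]
      have h4 : (a :: t : Multiset ℕ) = a ::ₘ ((B j₀).erase a + ∑ j ∈ Finset.univ.erase j₀, B j) := by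
        rw [h, h2]
        conv_lhs => rw [← Multiset.cons_erase haj]
        rw [Multiset.cons_add]
      have h5 : (a :: t : Multiset ℕ) = a ::ₘ (t : Multiset ℕ) := by
        simp
      rw [h5] at h4
      rw [(Multiset.cons_inj_right a).1 h4, h3, Finset.erase_eq]
    obtain ⟨f', hf'⟩ := ih m (Function.update B j₀ ((B j₀).erase a)) ht
    refine ⟨Fin.cases j₀ f', fun j => ?_⟩
    have hsucc : (∑ i : Fin (t.length + 1), if Fin.cases j₀ f' i = j then (a :: t).get i else 0)
        = (if j₀ = j then a else 0) +
          ∑ i : Fin t.length, if f' i = j then t.get i else 0 := by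
      rw [Fin.sum_univ_succ]
      simp
      rfl
    rw [show (∑ i : Fin (a :: t).length, if Fin.cases j₀ f' i = j then (a :: t).get i else 0)
        = ∑ i : Fin (t.length + 1), if Fin.cases j₀ f' i = j then (a :: t).get i else 0 from rfl,
      hsucc, hf' j]
    by_cases hj : j = j₀
    · subst hj
      rw [if_pos rfl, Function.update_self, ← Multiset.sum_cons, Multiset.cons_erase haj]
    · rw [if_neg (Ne.symm hj), Function.update_of_ne hj, zero_add]

/-- Multiset sum is a monoid hom (used to push `Multiset.sum` through `Finset.sum`). -/
def msumHom : Multiset ℕ →+ ℕ where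
  toFun := Multiset.sum
  map_zero' := Multiset.sum_zero
  map_add' := fun s t => Multiset.sum_add s t

/-- From a nonzero `Cfun`, extract a decomposition of `ν` into blocks whose sums
form `ρ'`. -/
lemma decomp_of_cfun (ν ρ' : Multiset ℕ) (h : Cfun ν ρ' ≠ 0) :
    ∃ D : Multiset (Multiset ℕ), D.sum = ν ∧ D.map Multiset.sum = ρ' := by
  rw [Cfun] at h
  obtain ⟨f, hf⟩ := (Nat.card_ne_zero.mp h).1
  refine ⟨↑(List.ofFn fun j : Fin ρ'.toList.length =>
      ∑ i : Fin ν.toList.length, if f i = j then ({ν.toList.get i} : Multiset ℕ) else 0),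
      ?_, ?_⟩
  · rw [Multiset.sum_coe, List.sum_ofFn, Finset.sum_comm]
    have hinner : ∀ i : Fin ν.toList.length,
        (∑ j, if f i = j then ({ν.toList.get i} : Multiset ℕ) else 0)
          = ({ν.toList.get i} : Multiset ℕ) := by
      intro i
      rw [Finset.sum_ite_eq Finset.univ (f i) (fun _ => ({ν.toList.get i} : Multiset ℕ))]
      simp
    calc (∑ i : Fin ν.toList.length, ∑ j, if f i = j then ({ν.toList.get i} : Multiset ℕ) else 0)
        = ∑ i : Fin ν.toList.length, ({ν.toList.get i} : Multiset ℕ) := by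
          exact Finset.sum_congr rfl fun i _ => hinner i
      _ = (ν.toList : Multiset ℕ) := sum_singletons ν.toList
      _ = ν := Multiset.coe_toList ν
  · rw [Multiset.map_coe, List.map_ofFn]
    have hcomp : (Multiset.sum ∘ fun j : Fin ρ'.toList.length =>
        ∑ i : Fin ν.toList.length, if f i = j then ({ν.toList.get i} : Multiset ℕ) else 0)
        = fun j => ρ'.toList.get j := by
      funext j
      have h1 : (∑ i : Fin ν.toList.length,
          if f i = j then ({ν.toList.get i} : Multiset ℕ) else 0).sum
          = ∑ i : Fin ν.toList.length,
            (if f i = j then ({ν.toList.get i} : Multiset ℕ) else 0).sum := by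
        exact map_sum msumHom _ _
      have h2 : ∀ i : Fin ν.toList.length,
          (if f i = j then ({ν.toList.get i} : Multiset ℕ) else 0).sum
          = if f i = j then ν.toList.get i else 0 := by
        intro i
        by_cases hij : f i = j <;> simp [hij]
      simp only [Function.comp_apply]
      rw [h1, Finset.sum_congr rfl fun i _ => h2 i, ← Finset.sum_filter]
      exact hf j
    rw [hcomp, List.ofFn_get, Multiset.coe_toList]

lemma descList_coe (m : Multiset ℕ) : (↑(descList m) : Multiset ℕ) = m := by
  rw [descList, Multiset.coe_reverse, Multiset.sort_eq]

lemma descList_sorted (m : Multiset ℕ) : List.Pairwise (· ≥ ·) (descList m) := by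
  rw [descList]
  exact List.pairwise_reverse.2 (Multiset.pairwise_sort m (· ≤ ·))

lemma descList_eq (m : Multiset ℕ) (r : ℕ) (hr : r ∈ m) (hmax : ∀ x ∈ m, x ≤ r) :
    descList m = r :: descList (m.erase r) := by
  haveI : IsAntisymm ℕ (· ≥ ·) := ⟨fun a b h1 h2 => le_antisymm h2 h1⟩
  haveI : Std.Antisymm (α := ℕ) (· ≥ ·) := ⟨fun a b h1 h2 => le_antisymm h2 h1⟩
  refine (fun hp h1 h2 => List.Perm.eq_of_pairwise' (r := (· ≥ ·)) h1 h2 hp) ?_ ?_ ?_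
  · rw [← Multiset.coe_eq_coe, descList_coe]
    show m = ↑(r :: descList (m.erase r))
    rw [← Multiset.cons_coe, descList_coe, Multiset.cons_erase hr]
  · exact descList_sorted m
  · rw [List.pairwise_cons]
    refine ⟨fun b hb => ?_, descList_sorted _⟩
    have hb' : b ∈ m.erase r := by
      rw [← descList_coe (m.erase r)]
      exact Multiset.mem_coe.2 hb
    exact hmax b (Multiset.mem_of_mem_erase hb')

lemma even_sum_iff (d : Multiset ℕ) (h : ∀ x ∈ d, Odd x) :
    Even d.sum ↔ Even (Multiset.card d) := by
  induction d using Multiset.induction_on with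
  | empty => simp
  | cons a s ih =>
    have ha : ¬ Even a := Nat.not_even_iff_odd.mpr (h a (Multiset.mem_cons_self a s))
    have ih' := ih (fun x hx => h x (Multiset.mem_cons_of_mem hx))
    rw [Multiset.sum_cons, Multiset.card_cons, Nat.even_add, Nat.even_add_one, ih']
    tauto

lemma eq_one_singleton (d : Multiset ℕ) (h0 : d ≠ 0) (hpos : ∀ x ∈ d, 0 < x)
    (hs : d.sum = 1) : d = {1} := by
  obtain ⟨x, hx⟩ := Multiset.exists_mem_of_ne_zero h0
  obtain ⟨e, rfl⟩ : ∃ e, d = x ::ₘ e := ⟨d.erase x, (Multiset.cons_erase hx).symm⟩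
  rw [Multiset.sum_cons] at hs
  have hx1 : 0 < x := hpos x (Multiset.mem_cons_self _ _)
  have he0 : e = 0 := by
    rw [Multiset.eq_zero_iff_forall_notMem]
    intro y hy
    have h1 : 0 < y := hpos y (Multiset.mem_cons_of_mem hy)
    have h2 : y ≤ e.sum := Multiset.single_le_sum (fun _ _ => Nat.zero_le _) y hy
    omega
  subst he0
  simp only [Multiset.sum_zero] at hs
  have : x = 1 := by omega
  subst this
  rfl

lemma mem_le_msum {d : Multiset ℕ} {D : Multiset (Multiset ℕ)} (hd : d ∈ D) :
    d ≤ D.sum := by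
  conv_rhs => rw [← Multiset.cons_erase hd]
  rw [Multiset.sum_cons]
  exact Multiset.le_add_right _ _

lemma mem_msum {a : ℕ} {D : Multiset (Multiset ℕ)} (ha : a ∈ D.sum) :
    ∃ d ∈ D, a ∈ d := by
  induction D using Multiset.induction_on with
  | empty => simp at ha
  | cons s S ih =>
    rw [Multiset.sum_cons, Multiset.mem_add] at ha
    rcases ha with ha | ha
    · exact ⟨s, Multiset.mem_cons_self _ _, ha⟩
    · obtain ⟨d, hd, hd'⟩ := ih ha
      exact ⟨d, Multiset.mem_cons_of_mem hd, hd'⟩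

lemma nuOf_cons (r : ℕ) (s : Multiset ℕ) :
    nuOf (r ::ₘ s) = (r - 1) ::ₘ 1 ::ₘ nuOf s := by
  simp only [nuOf, Multiset.map_cons, Multiset.card_cons, Multiset.replicate_succ,
    Multiset.cons_add, Multiset.add_cons]
  rw [Multiset.cons_swap]

lemma nuOf_mem (ρ : Multiset ℕ) (he : ∀ x ∈ ρ, Even x) (hp : ∀ x ∈ ρ, 0 < x) :
    ∀ x ∈ nuOf ρ, Odd x ∧ 0 < x := by
  intro x hx
  rw [nuOf, Multiset.mem_add] at hx
  rcases hx with hx | hx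
  · obtain ⟨y, hy, rfl⟩ := Multiset.mem_map.1 hx
    have h1 : y % 2 = 0 := Nat.even_iff.mp (he y hy)
    have h2 : 0 < y := hp y hy
    refine ⟨Nat.odd_iff.mpr ?_, ?_⟩ <;> omega
  · rw [Multiset.eq_of_mem_replicate hx]
    exact ⟨odd_one, one_pos⟩

/-- The key combinatorial lemma: triangularity for decompositions of `nuOf P`. -/
lemma key : ∀ (n : ℕ) (P P' : Multiset ℕ) (D : Multiset (Multiset ℕ)),
    Multiset.card P = n →
    (∀ x ∈ P, Even x) → (∀ x ∈ P, 0 < x) →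
    (∀ x ∈ P', Even x) → (∀ x ∈ P', 0 < x) →
    D.sum = nuOf P → D.map Multiset.sum = P' →
    P = P' ∨ List.Lex (· < ·) (descList P) (descList P') := by
  intro n
  induction n with
  | zero =>
    intro P P' D hcard hPe hPp hP'e hP'p hD hD'
    have hP0 : P = 0 := Multiset.card_eq_zero.mp hcard
    subst hP0
    left
    symm
    rw [Multiset.eq_zero_iff_forall_notMem]
    intro y hy
    have hypos : 0 < y := hP'p y hy
    rw [← hD'] at hy
    obtain ⟨d, hd, rfl⟩ := Multiset.mem_map.1 hy
    have h0 : D.sum = 0 := by simpa [nuOf] using hD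
    have hd0 : d = 0 := le_antisymm (h0 ▸ mem_le_msum hd) (Multiset.zero_le d)
    rw [hd0] at hypos
    simp at hypos
  | succ k ih =>
    intro P P' D hcard hPe hPp hP'e hP'p hD hD'
    have hP0 : P ≠ 0 := by
      intro h; rw [h] at hcard; simp at hcard
    have hFn : P.toFinset.Nonempty := by
      obtain ⟨x, hx⟩ := Multiset.exists_mem_of_ne_zero hP0
      exact ⟨x, Multiset.mem_toFinset.2 hx⟩
    set r := P.toFinset.max' hFn with hrdef
    have hrP : r ∈ P := Multiset.mem_toFinset.1 (Finset.max'_mem _ _)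
    have hrmax : ∀ x ∈ P, x ≤ r := fun x hx => Finset.le_max' _ x (Multiset.mem_toFinset.2 hx)
    have hr2 : 2 ≤ r := by
      have h1 : r % 2 = 0 := Nat.even_iff.mp (hPe r hrP)
      have h2 : 0 < r := hPp r hrP
      omega
    have hr1 : r - 1 ∈ D.sum := by
      rw [hD, nuOf, Multiset.mem_add]
      left
      exact Multiset.mem_map_of_mem _ hrP
    obtain ⟨d, hdD, hrd⟩ := mem_msum hr1
    have hmemd : ∀ x ∈ d, Odd x ∧ 0 < x := fun x hx =>
      nuOf_mem P hPe hPp x (by rw [← hD]; exact Multiset.mem_of_le (mem_le_msum hdD) hx)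
    have htP' : d.sum ∈ P' := by rw [← hD']; exact Multiset.mem_map_of_mem _ hdD
    have hte : Even d.sum := hP'e _ htP'
    obtain ⟨d', hdd⟩ : ∃ d', d = (r - 1) ::ₘ d' := ⟨d.erase (r - 1), (Multiset.cons_erase hrd).symm⟩
    have hd'0 : d' ≠ 0 := by
      intro h
      rw [h] at hdd
      have hsum : d.sum = r - 1 := by rw [hdd]; simp
      have hodd : Odd (r - 1) := (hmemd (r - 1) hrd).1
      rw [hsum] at hte
      rw [Nat.even_iff] at hte
      rw [Nat.odd_iff] at hodd
      omega
    have hd'sum : 1 ≤ d'.sum := by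
      obtain ⟨x, hx⟩ := Multiset.exists_mem_of_ne_zero hd'0
      have hxp : 0 < x := (hmemd x (by rw [hdd]; exact Multiset.mem_cons_of_mem hx)).2
      calc 1 ≤ x := hxp
        _ ≤ d'.sum := Multiset.single_le_sum (fun _ _ => Nat.zero_le _) x hx
    have htsum : d.sum = (r - 1) + d'.sum := by rw [hdd, Multiset.sum_cons]
    have htr : r ≤ d.sum := by omega
    have hFn' : P'.toFinset.Nonempty := ⟨d.sum, Multiset.mem_toFinset.2 htP'⟩
    set r' := P'.toFinset.max' hFn' with hr'def
    have hr'P' : r' ∈ P' := Multiset.mem_toFinset.1 (Finset.max'_mem _ _)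
    have hr'max : ∀ x ∈ P', x ≤ r' := fun x hx => Finset.le_max' _ x (Multiset.mem_toFinset.2 hx)
    have hrr' : r ≤ r' := le_trans htr (hr'max _ htP')
    have hdesc : descList P = r :: descList (P.erase r) := descList_eq P r hrP hrmax
    have hdesc' : descList P' = r' :: descList (P'.erase r') := descList_eq P' r' hr'P' hr'max
    rcases lt_or_eq_of_le hrr' with hlt | heq
    · right
      rw [hdesc, hdesc']
      exact List.Lex.rel hlt
    · have htr' : d.sum = r := le_antisymm (heq ▸ hr'max _ htP') htr
      have hd'1 : d'.sum = 1 := by omega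
      have hd1 : d' = {1} := eq_one_singleton d' hd'0
        (fun x hx => (hmemd x (by rw [hdd]; exact Multiset.mem_cons_of_mem hx)).2) hd'1
      have hrP'mem : r ∈ P' := htr' ▸ htP'
      have hDsum : (D.erase d).sum = nuOf (P.erase r) := by
        have h1 : D.sum = d + (D.erase d).sum := by
          rw [← Multiset.sum_cons, Multiset.cons_erase hdD]
        have h2 : nuOf P = d + nuOf (P.erase r) := by
          conv_lhs => rw [← Multiset.cons_erase hrP]
          rw [nuOf_cons, hdd, hd1, Multiset.cons_add, Multiset.singleton_add]
        have h3 : d + (D.erase d).sum = d + nuOf (P.erase r) := by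
          rw [← h1, hD, h2]
        exact add_left_cancel h3
      have hDmap : (D.erase d).map Multiset.sum = P'.erase r := by
        have h1 : D.map Multiset.sum = d.sum ::ₘ (D.erase d).map Multiset.sum := by
          conv_lhs => rw [← Multiset.cons_erase hdD, Multiset.map_cons]
        rw [hD'] at h1
        rw [h1, htr', Multiset.erase_cons_head]
      have hcard' : Multiset.card (P.erase r) = k := by
        rw [Multiset.card_erase_of_mem hrP, hcard]
        rfl
      have hrec := ih (P.erase r) (P'.erase r) (D.erase d) hcard'
        (fun x hx => hPe x (Multiset.mem_of_mem_erase hx))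
        (fun x hx => hPp x (Multiset.mem_of_mem_erase hx))
        (fun x hx => hP'e x (Multiset.mem_of_mem_erase hx))
        (fun x hx => hP'p x (Multiset.mem_of_mem_erase hx))
        hDsum hDmap
      rcases hrec with h | h
      · left
        rw [← Multiset.cons_erase hrP, ← Multiset.cons_erase hrP'mem, h]
      · right
        rw [hdesc, hdesc', ← heq]
        exact List.Lex.cons h

/-- For a partition `ρ` of `2d` with all parts even, `C(ν(ρ), ρ) ≠ 0`,
and for every partition `ρ'` of `2d` with all parts even, `C(ν(ρ), ρ') ≠ 0` implies that
`ρ'` is greater than or equal to `ρ` in the lexicographic order (comparing the parts in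
decreasing order). -/
theorem Cfun_triangular (d : ℕ) (ρ : Nat.Partition (2 * d))
    (hρ : ∀ x ∈ ρ.parts, Even x) :
    Cfun (nuOf ρ.parts) ρ.parts ≠ 0 ∧
    ∀ ρ' : Nat.Partition (2 * d), (∀ x ∈ ρ'.parts, Even x) →
      Cfun (nuOf ρ.parts) ρ'.parts ≠ 0 →
      ρ' = ρ ∨ List.Lex (· < ·) (descList ρ.parts) (descList ρ'.parts) := by
  constructor
  · rw [Cfun, Nat.card_ne_zero]
    constructor
    · -- Nonempty: build the witness from the canonical decomposition
      have hpos : ∀ j : Fin ρ.parts.toList.length, 1 ≤ ρ.parts.toList.get j := by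
        intro j
        exact ρ.parts_pos (Multiset.mem_toList.1 (ρ.parts.toList.get_mem _))
      have hdec : ((nuOf ρ.parts).toList : Multiset ℕ)
          = ∑ j : Fin ρ.parts.toList.length, ({ρ.parts.toList.get j - 1, 1} : Multiset ℕ) := by
        rw [Multiset.coe_toList,
          fin_sum_get ρ.parts.toList (fun x => ({x - 1, 1} : Multiset ℕ)),
          Multiset.coe_toList]
        have hsplit : (fun x : ℕ => ({x - 1, 1} : Multiset ℕ))
            = fun x : ℕ => ({x - 1} : Multiset ℕ) + {1} := by
          funext x
          rw [Multiset.singleton_add]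
          rfl
        rw [hsplit, Multiset.sum_map_add]
        have h1 : (ρ.parts.map fun x => ({x - 1} : Multiset ℕ)).sum = ρ.parts.map (· - 1) := by
          rw [show (fun x : ℕ => ({x - 1} : Multiset ℕ))
              = (fun a : ℕ => ({a} : Multiset ℕ)) ∘ (· - 1) from rfl,
            ← Multiset.map_map, Multiset.sum_map_singleton]
        have h2 : (ρ.parts.map fun _ => ({1} : Multiset ℕ)).sum
            = Multiset.replicate (Multiset.card ρ.parts) 1 := by
          rw [Multiset.map_const', Multiset.sum_replicate, Multiset.nsmul_singleton]
        rw [h1, h2, nuOf]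
      obtain ⟨f, hf⟩ := exists_fun_of_decomp (nuOf ρ.parts).toList ρ.parts.toList.length
        (fun j => ({ρ.parts.toList.get j - 1, 1} : Multiset ℕ)) hdec
      refine ⟨f, fun j => ?_⟩
      rw [Finset.sum_filter, hf j]
      have h3 : ({ρ.parts.toList.get j - 1, 1} : Multiset ℕ).sum
          = ρ.parts.toList.get j - 1 + 1 := by
        simp
      rw [h3]
      have := hpos j
      omega
    · infer_instance
  · intro ρ' hρ' hC
    obtain ⟨D, hD, hD'⟩ := decomp_of_cfun (nuOf ρ.parts) ρ'.parts hC
    have hkey := key (Multiset.card ρ.parts) ρ.parts ρ'.parts D rfl hρ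
      (fun x hx => ρ.parts_pos hx) hρ' (fun x hx => ρ'.parts_pos hx) hD hD'
    rcases hkey with h | h
    · left
      exact Nat.Partition.ext h.symm
    · right
      exact h

end
end

section
/- Let F be the unique formal power series in two variables u, z over ℚ with constant term 1 satisfying F² · (1 − u) · (1 − u·E₂) = (1 + u·E₁)², where E_j := Σ_{k≥0} (−jz)^k/k! is the power series exp(−jz). Then for every k ≥ 1 there exists a polynomial Q_k ∈ ℚ[X] such that: (i) for every n ≥ 0 the coefficient of uⁿ z^k in F equals Q_k(n); (ii) Q_k(−X) = (−1)^k Q_k(X) (so Q_k is an even polynomial if k is even and an odd polynomial if k is odd); and (iii) Q_k(0) = 0. -/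
open scoped BigOperators

noncomputable section

/-- The power series `E_j = exp(-jz) = Σ_{k≥0} (-jz)^k / k!` viewed as a two-variable
power series in the variables `u = X 0`, `z = X 1` (depending only on `z`). -/
def Eexp (j : ℕ) : MvPowerSeries (Fin 2) ℚ :=
  fun s => if s 0 = 0 then (-(j : ℚ)) ^ (s 1) / (Nat.factorial (s 1)) else 0

abbrev S := PowerSeries ℚ
abbrev T := PowerSeries S

namespace Aux

@[simp] lemma eval_pair0 (n k : ℕ) :
    (Finsupp.single (0 : Fin 2) n + Finsupp.single (1 : Fin 2) k) 0 = n := by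
  simp [Finsupp.single_apply]

@[simp] lemma eval_pair1 (n k : ℕ) :
    (Finsupp.single (0 : Fin 2) n + Finsupp.single (1 : Fin 2) k) 1 = k := by
  simp [Finsupp.single_apply]

lemma decomp (s : Fin 2 →₀ ℕ) :
    Finsupp.single (0 : Fin 2) (s 0) + Finsupp.single (1 : Fin 2) (s 1) = s := by
  ext a
  fin_cases a <;> simp [Finsupp.single_apply]

lemma pair_eq_zero_iff (n k : ℕ) :
    Finsupp.single (0 : Fin 2) n + Finsupp.single (1 : Fin 2) k = 0 ↔ n = 0 ∧ k = 0 := by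
  constructor
  · intro h
    refine ⟨?_, ?_⟩
    · have := congrArg (fun s : Fin 2 →₀ ℕ => s 0) h
      simpa using this
    · have := congrArg (fun s : Fin 2 →₀ ℕ => s 1) h
      simpa using this
  · rintro ⟨rfl, rfl⟩
    simp

/-- slicing map -/
def sl (f : MvPowerSeries (Fin 2) ℚ) : T :=
  PowerSeries.mk fun n => PowerSeries.mk fun k =>
    MvPowerSeries.coeff (Finsupp.single 0 n + Finsupp.single 1 k) f

@[simp] lemma coeff_sl (f : MvPowerSeries (Fin 2) ℚ) (n k : ℕ) :
    PowerSeries.coeff k (PowerSeries.coeff n (sl f)) =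
      MvPowerSeries.coeff (Finsupp.single 0 n + Finsupp.single 1 k) f := by
  simp [sl]

lemma key_sum (f g : MvPowerSeries (Fin 2) ℚ) (n k : ℕ) :
    MvPowerSeries.coeff (Finsupp.single 0 n + Finsupp.single 1 k) (f * g) =
      ∑ q ∈ Finset.HasAntidiagonal.antidiagonal n ×ˢ Finset.HasAntidiagonal.antidiagonal k,
        (MvPowerSeries.coeff (Finsupp.single 0 q.1.1 + Finsupp.single 1 q.2.1) f) *
        (MvPowerSeries.coeff (Finsupp.single 0 q.1.2 + Finsupp.single 1 q.2.2) g) := by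
  rw [MvPowerSeries.coeff_mul]
  refine Finset.sum_nbij' (i := fun p => ((p.1 0, p.2 0), (p.1 1, p.2 1)))
    (j := fun q => (Finsupp.single 0 q.1.1 + Finsupp.single 1 q.2.1,
      Finsupp.single 0 q.1.2 + Finsupp.single 1 q.2.2)) ?_ ?_ ?_ ?_ ?_
  · intro p hp
    rw [Finset.HasAntidiagonal.mem_antidiagonal] at hp
    simp only [Finset.mem_product, Finset.HasAntidiagonal.mem_antidiagonal]
    constructor
    · have := congrArg (fun s : Fin 2 →₀ ℕ => s 0) hp
      simpa using this
    · have := congrArg (fun s : Fin 2 →₀ ℕ => s 1) hp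
      simpa using this
  · intro q hq
    simp only [Finset.mem_product, Finset.HasAntidiagonal.mem_antidiagonal] at hq
    rw [Finset.HasAntidiagonal.mem_antidiagonal]
    rw [add_add_add_comm, ← Finsupp.single_add, ← Finsupp.single_add, hq.1, hq.2]
  · intro p hp
    ext : 1 <;> exact decomp _
  · intro q hq
    simp
  · intro p hp
    rw [decomp, decomp]

def sigma : MvPowerSeries (Fin 2) ℚ →+* T where
  toFun := sl
  map_zero' := by
    ext n k : 2
    simp
  map_add' f g := by
    ext n k : 2
    simp
  map_one' := by
    ext n k : 2
    simp only [coeff_sl, MvPowerSeries.coeff_one, PowerSeries.coeff_one]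
    by_cases hn : n = 0 <;> by_cases hk : k = 0 <;>
      simp [pair_eq_zero_iff, hn, hk]
  map_mul' f g := by
    ext n k : 2
    rw [coeff_sl, key_sum, PowerSeries.coeff_mul, map_sum, Finset.sum_product]
    refine Finset.sum_congr rfl fun q hq => ?_
    rw [PowerSeries.coeff_mul]
    refine Finset.sum_congr rfl fun r hr => ?_
    simp [sl]

end Aux

namespace Aux

/-- `eps a = exp (a z)` in `S`. -/
def eps (a : ℚ) : S := PowerSeries.rescale a (PowerSeries.exp ℚ)

@[simp] lemma coeff_eps (a : ℚ) (k : ℕ) :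
    PowerSeries.coeff k (eps a) = a ^ k * (1 / k.factorial) := by
  simp [eps, PowerSeries.coeff_rescale, PowerSeries.coeff_exp]

lemma eps_mul (a b : ℚ) : eps a * eps b = eps (a + b) :=
  PowerSeries.exp_mul_exp_eq_exp_add a b

@[simp] lemma eps_zero : eps 0 = 1 := by
  ext k
  rcases k with _ | k <;> simp [PowerSeries.coeff_one, Nat.factorial]

lemma sigma_X0 : sigma (MvPowerSeries.X 0) = (PowerSeries.X : T) := by
  ext n k : 2
  show PowerSeries.coeff k (PowerSeries.coeff n (sl (MvPowerSeries.X 0))) = _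
  rw [coeff_sl]
  rw [MvPowerSeries.X, MvPowerSeries.coeff_monomial]
  rw [PowerSeries.coeff_X]
  by_cases hn : n = 1
  · subst hn
    by_cases hk : k = 0
    · subst hk
      rw [if_pos, if_pos rfl]
      · simp only [if_pos rfl, PowerSeries.coeff_zero_eq_constantCoeff, map_one]
      · simp
    · rw [if_neg, if_pos rfl, PowerSeries.coeff_one, if_neg hk]
      intro h
      have := congrArg (fun s : Fin 2 →₀ ℕ => s 1) h
      simp [Finsupp.single_apply] at this
      exact hk this
  · rw [if_neg, if_neg hn]
    · simp
    · intro h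
      have := congrArg (fun s : Fin 2 →₀ ℕ => s 0) h
      simp [Finsupp.single_apply] at this
      exact hn this

lemma sigma_Eexp (j : ℕ) : sigma (Eexp j) = PowerSeries.C (R := S) (eps (-(j : ℚ))) := by
  ext n k : 2
  show PowerSeries.coeff k (PowerSeries.coeff n (sl (Eexp j))) = _
  rw [coeff_sl]
  have : MvPowerSeries.coeff (Finsupp.single 0 n + Finsupp.single 1 k) (Eexp j)
      = if n = 0 then (-(j : ℚ)) ^ k / (Nat.factorial k) else 0 := by
    show (Eexp j) _ = _
    rw [Eexp]
    simp only [eval_pair0, eval_pair1]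
  rw [this, PowerSeries.coeff_C]
  by_cases hn : n = 0
  · subst hn
    rw [if_pos rfl, if_pos rfl, coeff_eps, div_eq_mul_one_div]
  · simp [hn]


/-- `aP j = binom(X,j)·binom(X+j,j)` as an explicit polynomial. -/
def aP (j : ℕ) : Polynomial ℚ :=
  Polynomial.C (((j.factorial : ℚ))⁻¹ * ((j.factorial : ℚ))⁻¹) *
    ∏ t ∈ Finset.range (2 * j), (Polynomial.X + Polynomial.C ((t : ℚ) + 1 - (j : ℚ)))

lemma aP_eval (j : ℕ) (y : ℚ) :
    (aP j).eval y = ((j.factorial : ℚ))⁻¹ * ((j.factorial : ℚ))⁻¹ *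
      ∏ t ∈ Finset.range (2 * j), (y + ((t : ℚ) + 1 - (j : ℚ))) := by
  simp [aP, Polynomial.eval_prod]

@[simp] lemma aP_zero : aP 0 = 1 := by
  simp [aP]

lemma aP_eval_vanish (j n : ℕ) (h : n < j) : (aP j).eval (n : ℚ) = 0 := by
  rw [aP_eval]
  rw [Finset.prod_eq_zero (i := j - 1 - n) (by
      simp only [Finset.mem_range]; omega)]
  · ring
  · have h2 : j - 1 - n = j - (1 + n) := by omega
    rw [h2, Nat.cast_sub (by omega)]
    push_cast
    ring

lemma aP_parity (j : ℕ) (y : ℚ) : (aP j).eval (-1 - y) = (aP j).eval y := by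
  rw [aP_eval, aP_eval]
  congr 1
  have step1 : ∏ t ∈ Finset.range (2 * j), (-1 - y + ((t : ℚ) + 1 - (j : ℚ)))
      = ∏ t ∈ Finset.range (2 * j),
          (-1 : ℚ) * (y + (((2 * j - 1 - t : ℕ) : ℚ) + 1 - (j : ℚ))) := by
    refine Finset.prod_congr rfl fun t ht => ?_
    rw [Finset.mem_range] at ht
    have h2 : 2 * j - 1 - t = 2 * j - (1 + t) := by omega
    rw [h2, Nat.cast_sub (by omega)]
    push_cast
    ring
  rw [step1, Finset.prod_mul_distrib, Finset.prod_const, Finset.card_range,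
    Finset.prod_range_reflect (fun t => y + ((t : ℚ) + 1 - (j : ℚ))) (2 * j)]
  have h3 : (-1 : ℚ) ^ (2 * j) = 1 := by
    rw [pow_mul]
    norm_num
  rw [h3, one_mul]

def Pf (y c : ℚ) (N : ℕ) : ℚ := ∏ t ∈ Finset.range N, (y + (t : ℚ) + c)

lemma Pf_congr (y : ℚ) {c c' : ℚ} {N N' : ℕ} (h : c = c') (h' : N = N') :
    Pf y c N = Pf y c' N' := by rw [h, h']

lemma Pf_succ' (y c : ℚ) (N : ℕ) : Pf y c (N + 1) = Pf y (c + 1) N * (y + c) := by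
  unfold Pf
  rw [Finset.prod_range_succ']
  congr 1
  · exact Finset.prod_congr rfl fun t _ => by push_cast; ring
  · push_cast; ring

lemma Pf_succ (y c : ℚ) (N : ℕ) : Pf y c (N + 1) = Pf y c N * (y + (N : ℚ) + c) :=
  Finset.prod_range_succ _ _

lemma Pf_shift (y d c : ℚ) (N : ℕ) : Pf (y + d) c N = Pf y (c + d) N :=
  Finset.prod_congr rfl fun t _ => by ring

lemma aP_eval_Pf (j : ℕ) (z : ℚ) :
    (aP j).eval z = ((j.factorial : ℚ))⁻¹ * ((j.factorial : ℚ))⁻¹ * Pf z (1 - (j : ℚ)) (2 * j) := by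
  rw [aP_eval]
  congr 1
  exact Finset.prod_congr rfl fun t _ => by ring

lemma aP_rec (i : ℕ) (y : ℚ) :
    (y + 2) * (aP (i+1)).eval (y + 2) + (y + 1) * (aP (i+1)).eval y
      = (2 * y + 3) * ((aP (i+1)).eval (y + 1) + 2 * (aP i).eval (y + 1)) := by
  have hfac : (((i+1).factorial : ℚ)) = ((i : ℚ) + 1) * (i.factorial : ℚ) := by
    rw [Nat.factorial_succ]; push_cast; ring
  have hine : (i.factorial : ℚ) ≠ 0 := Nat.cast_ne_zero.mpr i.factorial_ne_zero
  have hine1 : ((i : ℚ) + 1) ≠ 0 := by positivity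
  set m : ℚ := Pf y (2 - (i : ℚ)) (2 * i) with hm
  have hc : (1 - ((i+1 : ℕ) : ℚ)) = -(i : ℚ) := by push_cast; ring
  have hN : 2 * (i + 1) = 2 * i + 1 + 1 := by ring
  have e1 : (aP (i+1)).eval y
      = (((i+1).factorial : ℚ))⁻¹ * (((i+1).factorial : ℚ))⁻¹ * (m * (y + 1 - i) * (y - i)) := by
    rw [aP_eval_Pf, Pf_congr y hc hN, Pf_succ', Pf_succ',
      Pf_congr y (show -(i:ℚ) + 1 + 1 = 2 - i by ring) rfl]
    ring
  have e2 : (aP (i+1)).eval (y + 1)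
      = (((i+1).factorial : ℚ))⁻¹ * (((i+1).factorial : ℚ))⁻¹
          * (m * (y + 1 - i) * (y + i + 2)) := by
    rw [aP_eval_Pf, Pf_congr (y+1) hc hN, Pf_shift, Pf_succ, Pf_succ',
      Pf_congr y (show -(i:ℚ) + 1 + 1 = 2 - i by ring) rfl]
    push_cast
    ring
  have e3 : (aP (i+1)).eval (y + 2)
      = (((i+1).factorial : ℚ))⁻¹ * (((i+1).factorial : ℚ))⁻¹
          * (m * (y + i + 2) * (y + i + 3)) := by
    rw [aP_eval_Pf, Pf_congr (y+2) hc hN, Pf_shift, Pf_succ, Pf_succ,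
      Pf_congr y (show -(i:ℚ) + 2 = 2 - i by ring) rfl]
    push_cast
    ring
  have e4 : (aP i).eval (y + 1)
      = ((i.factorial : ℚ))⁻¹ * ((i.factorial : ℚ))⁻¹ * m := by
    rw [aP_eval_Pf, Pf_shift, Pf_congr y (show 1 - (i:ℚ) + 1 = 2 - i by ring) rfl]
  rw [e1, e2, e3, e4, hfac]
  field_simp
  ring

/-- `ch = cosh z`. -/
def ch : S := PowerSeries.C (R := ℚ) (1/2) * (eps 1 + eps (-1))

/-- `sq = (cosh z - 1)/2 = sinh²(z/2)`. -/
def sq : S := PowerSeries.C (R := ℚ) (1/2) * (ch - 1)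

lemma ch_eq : ch = 1 + PowerSeries.C (R := ℚ) 2 * sq := by
  have h : (PowerSeries.C (R := ℚ) 2) * (PowerSeries.C (R := ℚ) (1/2)) = 1 := by
    rw [← map_mul]; norm_num
  rw [sq, ← mul_assoc, h]; ring

/-- Legendre polynomials evaluated at `cosh z`. -/
def p (n : ℕ) : S :=
  ∑ j ∈ Finset.range (n+1), PowerSeries.C (R := ℚ) ((aP j).eval (n : ℚ)) * sq ^ j

lemma p_zero : p 0 = 1 := by simp [p]

lemma p_eq (n N : ℕ) (h : n + 1 ≤ N) :
    p n = ∑ j ∈ Finset.range N, PowerSeries.C (R := ℚ) ((aP j).eval (n : ℚ)) * sq ^ j := by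
  refine Finset.sum_subset (Finset.range_subset_range.mpr h) fun j hj hnj => ?_
  have hn : n < j := by
    simp only [Finset.mem_range] at hnj
    omega
  rw [aP_eval_vanish j n hn, map_zero, zero_mul]

lemma sum_scale (a : ℚ) (g : ℕ → ℚ) (N : ℕ) :
    PowerSeries.C (R := ℚ) a * (∑ j ∈ Finset.range N, PowerSeries.C (R := ℚ) (g j) * sq ^ j)
      = ∑ j ∈ Finset.range N, PowerSeries.C (R := ℚ) (a * g j) * sq ^ j := by
  rw [Finset.mul_sum]
  exact Finset.sum_congr rfl fun j _ => by rw [← mul_assoc, ← map_mul]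

lemma sq_mul_sum (g : ℕ → ℚ) (N : ℕ) (htop : g N = 0) :
    sq * (∑ j ∈ Finset.range (N+1), PowerSeries.C (R := ℚ) (g j) * sq ^ j)
      = ∑ j ∈ Finset.range (N+1),
          PowerSeries.C (R := ℚ) (if j = 0 then 0 else g (j-1)) * sq ^ j := by
  conv_rhs => rw [Finset.sum_range_succ']
  simp only [Nat.succ_ne_zero, if_false, if_true, eq_self_iff_true, Nat.add_sub_cancel, map_zero,
    zero_mul, add_zero]
  rw [Finset.sum_range_succ, htop, map_zero, zero_mul, add_zero, Finset.mul_sum]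
  exact Finset.sum_congr rfl fun j _ => by ring

lemma p_rec (n : ℕ) :
    ((n : S) + 2) * p (n+2) + ((n : S) + 1) * p n = (2 * (n : S) + 3) * (ch * p (n+1)) := by
  have hc1 : ((n : S) + 2) = PowerSeries.C (R := ℚ) ((n : ℚ) + 2) := by
    rw [map_add, map_natCast, map_ofNat]
  have hc2 : ((n : S) + 1) = PowerSeries.C (R := ℚ) ((n : ℚ) + 1) := by
    rw [map_add, map_natCast, map_one]
  have hc3 : (2 * (n : S) + 3) = PowerSeries.C (R := ℚ) (2 * (n : ℚ) + 3) := by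
    rw [map_add, map_mul, map_natCast, map_ofNat, map_ofNat]
  rw [hc1, hc2, hc3, p_eq n (n+4) (by omega), p_eq (n+1) (n+4) (by omega),
    p_eq (n+2) (n+4) (by omega), ch_eq]
  have hstep : (1 + PowerSeries.C (R := ℚ) 2 * sq) *
        (∑ j ∈ Finset.range (n+4), PowerSeries.C (R := ℚ) ((aP j).eval ((n+1 : ℕ) : ℚ)) * sq ^ j)
      = ∑ j ∈ Finset.range (n+4),
          PowerSeries.C (R := ℚ) ((aP j).eval ((n+1 : ℕ) : ℚ)
            + 2 * (if j = 0 then 0 else (aP (j-1)).eval ((n+1 : ℕ) : ℚ))) * sq ^ j := by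
    rw [add_mul, one_mul, mul_assoc,
      sq_mul_sum (fun j => (aP j).eval ((n+1 : ℕ) : ℚ)) (n+3)
        (aP_eval_vanish (n+3) (n+1) (by omega)),
      sum_scale, ← Finset.sum_add_distrib]
    refine Finset.sum_congr rfl fun j _ => ?_
    rw [← add_mul, ← map_add]
  rw [hstep, sum_scale, sum_scale, sum_scale, ← Finset.sum_add_distrib]
  refine Finset.sum_congr rfl fun j hj => ?_
  rw [← add_mul, ← map_add]
  congr 1
  rcases j with _ | i
  · simp only [if_pos rfl, aP_zero, Polynomial.eval_one]
    push_cast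
    ring
  · simp only [Nat.succ_ne_zero, if_false, Nat.add_sub_cancel]
    congr 1
    have h := aP_rec i (n : ℚ)
    push_cast
    linear_combination h

open scoped PowerSeries

attribute [local instance 2000] MvPowerSeries.instAlgebra

instance : CharZero S := by
  refine ⟨fun a b h => ?_⟩
  have h2 := congrArg (PowerSeries.constantCoeff) h
  simpa using h2

lemma p_one : p 1 = ch := by
  rw [ch_eq]
  unfold p
  rw [Finset.sum_range_succ, Finset.sum_range_one]
  have h1 : (aP 0).eval (((1:ℕ)) : ℚ) = 1 := by simp
  have h2 : (aP 1).eval (((1:ℕ)) : ℚ) = 2 := by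
    rw [aP_eval]
    norm_num [Finset.prod_range_succ]
  rw [h1, h2]
  simp

/-- generating series of Legendre polynomials at cosh z -/
def G : T := PowerSeries.mk p

def M0 : T := 1 - PowerSeries.C (R := S) (2 * ch) * PowerSeries.X + PowerSeries.X * PowerSeries.X

lemma hder : M0 * (PowerSeries.derivative S G) = (PowerSeries.C (R := S) ch - PowerSeries.X) * G := by
  have expand : M0 * (PowerSeries.derivative S G)
      = PowerSeries.derivative S G
        - PowerSeries.C (R := S) (2 * ch) * (PowerSeries.X * PowerSeries.derivative S G)
        + PowerSeries.X * (PowerSeries.X * PowerSeries.derivative S G) := by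
    rw [M0]; ring
  have expand2 : (PowerSeries.C (R := S) ch - PowerSeries.X) * G
      = PowerSeries.C (R := S) ch * G - PowerSeries.X * G := by ring
  rw [expand, expand2]
  refine PowerSeries.ext fun n => ?_
  rcases n with _ | _ | n
  · simp only [map_sub, map_add, PowerSeries.coeff_C_mul, PowerSeries.coeff_zero_X_mul,
      PowerSeries.coeff_derivative, PowerSeries.coeff_mk, G, mul_zero, sub_zero, add_zero]
    rw [p_one, p_zero]
    push_cast
    ring
  · simp only [map_sub, map_add, PowerSeries.coeff_C_mul, PowerSeries.coeff_succ_X_mul,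
      PowerSeries.coeff_zero_X_mul, PowerSeries.coeff_derivative, PowerSeries.coeff_mk, G]
    have h := p_rec 0
    push_cast at h ⊢
    linear_combination h
  · simp only [map_sub, map_add, PowerSeries.coeff_C_mul, PowerSeries.coeff_succ_X_mul,
      PowerSeries.coeff_derivative, PowerSeries.coeff_mk, G]
    have h := p_rec (n + 1)
    push_cast at h ⊢
    linear_combination h

lemma hGM : G * G * M0 = 1 := by
  have hC2 : PowerSeries.C (R := S) (2 * ch) = 2 * PowerSeries.C (R := S) ch := by
    rw [map_mul, map_ofNat]
  have h1 : PowerSeries.derivative S M0 = - PowerSeries.C (R := S) (2 * ch)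
      + (PowerSeries.X + PowerSeries.X) := by
    rw [M0, map_add, map_sub, Derivation.leibniz, Derivation.leibniz]
    simp only [smul_eq_mul, PowerSeries.derivative_X, PowerSeries.derivative_C,
      Derivation.map_one_eq_zero, mul_one, mul_zero, add_zero, zero_add]
    ring
  have hD : PowerSeries.derivative S (G * G * M0) = 0 := by
    rw [Derivation.leibniz, Derivation.leibniz]
    simp only [smul_eq_mul]
    rw [h1, hC2]
    linear_combination (2 * G) * hder
  have hc : PowerSeries.constantCoeff (G * G * M0) = PowerSeries.constantCoeff 1 := by
    rw [map_mul, map_mul, map_one]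
    have hcG : PowerSeries.constantCoeff G = 1 := by
      rw [G, ← PowerSeries.coeff_zero_eq_constantCoeff, PowerSeries.coeff_mk, p_zero]
    have hcM : PowerSeries.constantCoeff M0 = 1 := by
      rw [M0]
      simp
    rw [hcG, hcM]
    ring
  exact PowerSeries.derivative.ext (by rw [hD, Derivation.map_one_eq_zero]) hc

def e1 : S := eps (-1)
def e2 : S := eps (-2)

lemma e1_mul_e1 : e1 * e1 = e2 := by
  rw [e1, e2, eps_mul]; norm_num

lemma two_ch_mul_e1 : 2 * ch * e1 = 1 + e2 := by
  have h2 : (2 : S) * PowerSeries.C (R := ℚ) (1/2) = 1 := by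
    rw [show (2 : S) = PowerSeries.C (R := ℚ) 2 from (map_ofNat _ 2).symm, ← map_mul]
    norm_num
  have expand : 2 * ch * e1
      = (2 * PowerSeries.C (R := ℚ) (1/2)) * (eps 1 * eps (-1) + eps (-1) * eps (-1)) := by
    rw [ch, e1]; ring
  rw [expand, h2, one_mul, eps_mul, eps_mul]
  norm_num [e2]

lemma rescale_C' (a r : S) :
    PowerSeries.rescale a (PowerSeries.C (R := S) r) = PowerSeries.C (R := S) r := by
  ext n : 1
  rw [PowerSeries.coeff_rescale, PowerSeries.coeff_C]
  rcases n with _ | n <;> simp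

/-- the explicit solution -/
def F0 : T := (1 + PowerSeries.X * PowerSeries.C (R := S) e1) * PowerSeries.rescale e1 G

lemma hM0resc :
    (1 - PowerSeries.X) * (1 - PowerSeries.X * PowerSeries.C (R := S) e2)
      = PowerSeries.rescale e1 M0 := by
  rw [M0, map_add, map_sub, map_one,
    map_mul (PowerSeries.rescale e1) (PowerSeries.C (R := S) (2 * ch)) PowerSeries.X,
    map_mul (PowerSeries.rescale e1) PowerSeries.X PowerSeries.X,
    rescale_C', PowerSeries.rescale_X]
  have hA : PowerSeries.C (R := S) (2 * ch) * (PowerSeries.C (R := S) e1) = 1 + PowerSeries.C (R := S) e2 := by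
    rw [← map_mul, two_ch_mul_e1, map_add, map_one]
  have hB : (PowerSeries.C (R := S) e1) * (PowerSeries.C (R := S) e1) = PowerSeries.C (R := S) e2 := by
    rw [← map_mul, e1_mul_e1]
  linear_combination PowerSeries.X * hA - (PowerSeries.X * PowerSeries.X) * hB

lemma hF0eq : F0 ^ 2 * (1 - PowerSeries.X) * (1 - PowerSeries.X * PowerSeries.C (R := S) e2)
    = (1 + PowerSeries.X * PowerSeries.C (R := S) e1) ^ 2 := by
  have h : F0 ^ 2 * (1 - PowerSeries.X) * (1 - PowerSeries.X * PowerSeries.C (R := S) e2)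
      = F0 ^ 2 * ((1 - PowerSeries.X) * (1 - PowerSeries.X * PowerSeries.C (R := S) e2)) := by ring
  rw [h, hM0resc, F0]
  have h2 : ((1 + PowerSeries.X * PowerSeries.C (R := S) e1) * PowerSeries.rescale e1 G) ^ 2
        * PowerSeries.rescale e1 M0
      = (1 + PowerSeries.X * PowerSeries.C (R := S) e1) ^ 2
        * PowerSeries.rescale e1 (G * G * M0) := by
    rw [map_mul, map_mul]; ring
  rw [h2, hGM, map_one, mul_one]

lemma sigma_Eexp1 : sigma (Eexp 1) = PowerSeries.C (R := S) e1 := by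
  rw [sigma_Eexp, e1]; norm_num

lemma sigma_Eexp2 : sigma (Eexp 2) = PowerSeries.C (R := S) e2 := by
  rw [sigma_Eexp, e2]; norm_num

lemma sigma_eq_F0 (F : MvPowerSeries (Fin 2) ℚ)
    (hconst : MvPowerSeries.constantCoeff F = 1)
    (heq : F ^ 2 * (1 - MvPowerSeries.X 0) * (1 - MvPowerSeries.X 0 * Eexp 2) =
      (1 + MvPowerSeries.X 0 * Eexp 1) ^ 2) :
    sigma F = F0 := by
  have hs := congrArg sigma heq
  simp only [map_mul, map_pow, map_sub, map_add, map_one, sigma_X0, sigma_Eexp1,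
    sigma_Eexp2] at hs
  have hunit : IsUnit ((1 - PowerSeries.X) * (1 - PowerSeries.X * PowerSeries.C (R := S) e2) : T) := by
    apply IsUnit.mul
    · rw [PowerSeries.isUnit_iff_constantCoeff]
      simp only [map_sub, map_one, PowerSeries.constantCoeff_X, sub_zero]
      exact isUnit_one
    · rw [PowerSeries.isUnit_iff_constantCoeff]
      simp only [map_sub, map_one, map_mul, PowerSeries.constantCoeff_X, zero_mul, sub_zero]
      exact isUnit_one
  have h2 : ((1 - PowerSeries.X) * (1 - PowerSeries.X * PowerSeries.C (R := S) e2)) * (sigma F) ^ 2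
      = ((1 - PowerSeries.X) * (1 - PowerSeries.X * PowerSeries.C (R := S) e2)) * F0 ^ 2 := by
    linear_combination hs - hF0eq
  have h3 : (sigma F) ^ 2 = F0 ^ 2 := hunit.mul_left_cancel h2
  have h4 : (sigma F - F0) * (sigma F + F0) = 0 := by linear_combination h3
  have h5 : sigma F + F0 ≠ 0 := by
    intro h
    have hc := congrArg (fun g : T => PowerSeries.coeff 0 (PowerSeries.coeff 0 g)) h
    simp only [map_add, map_zero] at hc
    have hcf : PowerSeries.coeff 0 (PowerSeries.coeff 0 (sigma F)) = 1 := by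
      show PowerSeries.coeff 0 (PowerSeries.coeff 0 (sl F)) = 1
      rw [coeff_sl]
      have h0 : (Finsupp.single (0 : Fin 2) 0 + Finsupp.single (1 : Fin 2) 0) = 0 := by
        simp
      rw [h0]
      exact hconst
    have hcF0 : PowerSeries.coeff 0 (PowerSeries.coeff 0 F0) = 1 := by
      have hS : PowerSeries.coeff 0 F0 = 1 := by
        rw [PowerSeries.coeff_zero_eq_constantCoeff, F0, map_mul, map_add, map_one, map_mul,
          PowerSeries.constantCoeff_X, zero_mul, add_zero, one_mul]
        have hr := PowerSeries.coeff_rescale G e1 0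
        rw [pow_zero, one_mul, PowerSeries.coeff_zero_eq_constantCoeff] at hr
        rw [hr]
        rw [G, ← PowerSeries.coeff_zero_eq_constantCoeff, PowerSeries.coeff_mk, p_zero]
      rw [hS]
      simp
    rw [hcf, hcF0] at hc
    norm_num at hc
  have h6 : sigma F - F0 = 0 := by
    rcases mul_eq_zero.mp h4 with h | h
    · exact h
    · exact absurd h h5
  linear_combination h6

lemma eps_pow (n : ℕ) : e1 ^ n = eps (-(n : ℚ)) := by
  induction n with
  | zero => rw [pow_zero]; norm_num
  | succ m ih =>
      rw [pow_succ, ih, e1, eps_mul]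
      congr 1
      push_cast
      ring

lemma coeff_F0_zero : PowerSeries.coeff 0 F0 = 1 := by
  rw [PowerSeries.coeff_zero_eq_constantCoeff, F0, map_mul, map_add, map_one, map_mul,
    PowerSeries.constantCoeff_X, zero_mul, add_zero, one_mul]
  have hr := PowerSeries.coeff_rescale G e1 0
  rw [pow_zero, one_mul, PowerSeries.coeff_zero_eq_constantCoeff] at hr
  rw [hr, G, ← PowerSeries.coeff_zero_eq_constantCoeff, PowerSeries.coeff_mk, p_zero]

lemma coeff_F0_succ (n : ℕ) :
    PowerSeries.coeff (n + 1) F0 = eps (-((n : ℚ) + 1)) * (p (n + 1) + p n) := by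
  have hsplit : F0 = PowerSeries.rescale e1 G
      + PowerSeries.X * (PowerSeries.C (R := S) e1 * PowerSeries.rescale e1 G) := by
    rw [F0]; ring
  rw [hsplit, map_add, PowerSeries.coeff_succ_X_mul, PowerSeries.coeff_C_mul,
    PowerSeries.coeff_rescale, PowerSeries.coeff_rescale, G, PowerSeries.coeff_mk,
    PowerSeries.coeff_mk, ← mul_assoc, ← pow_succ', eps_pow]
  rw [show (-((n + 1 : ℕ) : ℚ)) = -((n : ℚ) + 1) by push_cast; ring]
  ring

/-- coefficients of powers of `sq` -/
def bet (i j : ℕ) : ℚ := PowerSeries.coeff i (sq ^ j)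

lemma coeff_ch (m : ℕ) :
    PowerSeries.coeff m ch = (1/2) * ((1 : ℚ) ^ m * (1 / m.factorial) + (-1 : ℚ) ^ m * (1 / m.factorial)) := by
  rw [ch, PowerSeries.coeff_C_mul, map_add, coeff_eps, coeff_eps]

lemma sq_X2 : (PowerSeries.X : S) ^ 2 ∣ sq := by
  rw [PowerSeries.X_pow_dvd_iff]
  intro m hm
  interval_cases m
  · rw [sq, PowerSeries.coeff_C_mul, map_sub, coeff_ch]
    norm_num [PowerSeries.coeff_one]
  · rw [sq, PowerSeries.coeff_C_mul, map_sub, coeff_ch, PowerSeries.coeff_one]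
    norm_num

lemma bet_vanish (i j : ℕ) (h : i < 2 * j) : bet i j = 0 := by
  have hdvd : (PowerSeries.X : S) ^ (2 * j) ∣ sq ^ j := by
    rw [pow_mul]
    exact pow_dvd_pow_of_dvd sq_X2 j
  exact PowerSeries.X_pow_dvd_iff.mp hdvd i h

def EvS (f : S) : Prop := ∀ m, Odd m → PowerSeries.coeff m f = 0

lemma evS_one : EvS 1 := by
  intro m hm
  rw [PowerSeries.coeff_one, if_neg]
  rintro rfl
  simp [Nat.odd_iff] at hm

lemma evS_ch : EvS ch := by
  intro m hm
  rw [coeff_ch, hm.neg_one_pow]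
  ring

lemma evS_sq : EvS sq := by
  intro m hm
  rw [sq, PowerSeries.coeff_C_mul, map_sub, evS_ch m hm, evS_one m hm]
  ring

lemma evS_mul {f g : S} (hf : EvS f) (hg : EvS g) : EvS (f * g) := by
  intro m hm
  rw [PowerSeries.coeff_mul]
  refine Finset.sum_eq_zero fun q hq => ?_
  rw [Finset.HasAntidiagonal.mem_antidiagonal] at hq
  rcases Nat.even_or_odd q.1 with ha | ha
  · have hb : Odd q.2 := by
      rcases Nat.even_or_odd q.2 with hb | hb
      · exfalso
        rw [← hq] at hm
        exact (Nat.not_odd_iff_even.mpr (ha.add hb)) hm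
      · exact hb
    rw [hg q.2 hb, mul_zero]
  · rw [hf q.1 ha, zero_mul]

lemma evS_sq_pow (j : ℕ) : EvS (sq ^ j) := by
  induction j with
  | zero => rw [pow_zero]; exact evS_one
  | succ i ih => rw [pow_succ]; exact evS_mul ih evS_sq

lemma bet_odd (i j : ℕ) (h : Odd i) : bet i j = 0 := evS_sq_pow j i h

def Lam (i : ℕ) : Polynomial ℚ :=
  ∑ j ∈ Finset.range (i + 1), Polynomial.C (bet i j) * aP j

lemma coeff_p_eval (n i : ℕ) : PowerSeries.coeff i (p n) = (Lam i).eval (n : ℚ) := by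
  have hL : PowerSeries.coeff i (p n)
      = ∑ j ∈ Finset.range (n + 1), (aP j).eval (n : ℚ) * bet i j := by
    rw [p, map_sum]
    exact Finset.sum_congr rfl fun j _ => by rw [PowerSeries.coeff_C_mul]; rfl
  have hR : (Lam i).eval (n : ℚ)
      = ∑ j ∈ Finset.range (i + 1), bet i j * (aP j).eval (n : ℚ) := by
    rw [Lam, Polynomial.eval_finset_sum]
    exact Finset.sum_congr rfl fun j _ => by
      rw [Polynomial.eval_mul, Polynomial.eval_C]
  have h1 : ∑ j ∈ Finset.range (n + 1), (aP j).eval (n : ℚ) * bet i j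
      = ∑ j ∈ Finset.range (n + i + 2), (aP j).eval (n : ℚ) * bet i j := by
    refine Finset.sum_subset (Finset.range_subset_range.mpr (by omega)) fun j _ hj => ?_
    have hn : n < j := by
      simp only [Finset.mem_range] at hj
      omega
    rw [aP_eval_vanish j n hn, zero_mul]
  have h2 : ∑ j ∈ Finset.range (i + 1), bet i j * (aP j).eval (n : ℚ)
      = ∑ j ∈ Finset.range (n + i + 2), bet i j * (aP j).eval (n : ℚ) := by
    refine Finset.sum_subset (Finset.range_subset_range.mpr (by omega)) fun j _ hj => ?_
    have hi : i < 2 * j := by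
      simp only [Finset.mem_range] at hj
      omega
    rw [bet_vanish i j hi, zero_mul]
  rw [hL, hR, h1, h2]
  exact Finset.sum_congr rfl fun j _ => mul_comm _ _

lemma Lam_parity (i : ℕ) (y : ℚ) : (Lam i).eval (-1 - y) = (Lam i).eval y := by
  rw [Lam, Polynomial.eval_finset_sum, Polynomial.eval_finset_sum]
  exact Finset.sum_congr rfl fun j _ => by
    rw [Polynomial.eval_mul, Polynomial.eval_mul, Polynomial.eval_C, Polynomial.eval_C,
      aP_parity]

lemma Lam_odd (i : ℕ) (h : Odd i) : Lam i = 0 := by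
  rw [Lam]
  exact Finset.sum_eq_zero fun j _ => by rw [bet_odd i j h, map_zero, zero_mul]

lemma Lam_eval_zero (i : ℕ) (h : 1 ≤ i) : (Lam i).eval 0 = 0 := by
  have hc := coeff_p_eval 0 i
  rw [p_zero, Nat.cast_zero, PowerSeries.coeff_one, if_neg (by omega)] at hc
  exact hc.symm

end Aux


/-- Let `F ∈ ℚ[[u, z]]` be the unique power series with constant term 1
satisfying `F²(1 - u)(1 - u·E₂) = (1 + u·E₁)²`.  Then for every `k ≥ 1` there is a
polynomial `Q_k ∈ ℚ[X]` such that the coefficient of `uⁿ z^k` in `F` equals `Q_k(n)` for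
all `n ≥ 0`, `Q_k(-X) = (-1)^k Q_k(X)`, and `Q_k(0) = 0`. -/
theorem coeff_polynomiality
    (F : MvPowerSeries (Fin 2) ℚ)
    (hconst : MvPowerSeries.constantCoeff F = 1)
    (heq : F ^ 2 * (1 - MvPowerSeries.X 0) * (1 - MvPowerSeries.X 0 * Eexp 2) =
      (1 + MvPowerSeries.X 0 * Eexp 1) ^ 2) :
    ∀ k : ℕ, 1 ≤ k → ∃ Q : Polynomial ℚ,
      (∀ n : ℕ,
        MvPowerSeries.coeff (Finsupp.single 0 n + Finsupp.single 1 k) F =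
          Q.eval (n : ℚ)) ∧
      (∀ x : ℚ, Q.eval (-x) = (-1 : ℚ) ^ k * Q.eval x) ∧
      Q.eval 0 = 0 := by
  intro k hk
  have hF : Aux.sigma F = Aux.F0 := Aux.sigma_eq_F0 F hconst heq
  refine ⟨∑ i ∈ Finset.range (k+1),
    Polynomial.C ((-1 : ℚ)^(k-i) * ((Nat.factorial (k-i) : ℚ))⁻¹) * Polynomial.X^(k-i) *
      (Aux.Lam i + (Aux.Lam i).comp (Polynomial.X - 1)), ?_, ?_, ?_⟩
  all_goals {
    have hQeval : ∀ x : ℚ, Polynomial.eval x (∑ i ∈ Finset.range (k+1),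
        Polynomial.C ((-1 : ℚ)^(k-i) * ((Nat.factorial (k-i) : ℚ))⁻¹) * Polynomial.X^(k-i) *
          (Aux.Lam i + (Aux.Lam i).comp (Polynomial.X - 1)))
        = ∑ i ∈ Finset.range (k+1),
          ((-1 : ℚ)^(k-i) * ((Nat.factorial (k-i) : ℚ))⁻¹) * x^(k-i) *
            ((Aux.Lam i).eval x + (Aux.Lam i).eval (x - 1)) := by
      intro x
      rw [Polynomial.eval_finset_sum]
      refine Finset.sum_congr rfl fun i _ => ?_
      simp [Polynomial.eval_comp]
    have hQ0 : Polynomial.eval (0:ℚ) (∑ i ∈ Finset.range (k+1),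
        Polynomial.C ((-1 : ℚ)^(k-i) * ((Nat.factorial (k-i) : ℚ))⁻¹) * Polynomial.X^(k-i) *
          (Aux.Lam i + (Aux.Lam i).comp (Polynomial.X - 1))) = 0 := by
      rw [hQeval 0, Finset.sum_range_succ]
      have hsum0 : ∑ i ∈ Finset.range k,
          ((-1 : ℚ)^(k-i) * ((Nat.factorial (k-i) : ℚ))⁻¹) * (0:ℚ)^(k-i) *
            ((Aux.Lam i).eval 0 + (Aux.Lam i).eval (0 - 1)) = 0 := by
        refine Finset.sum_eq_zero fun i hi => ?_
        have hne : k - i ≠ 0 := by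
          simp only [Finset.mem_range] at hi
          omega
        rw [zero_pow hne]
        ring
      rw [hsum0, zero_add, Nat.sub_self]
      have hm1 : (Aux.Lam k).eval ((0:ℚ) - 1) = (Aux.Lam k).eval 0 := by
        rw [show ((0:ℚ) - 1) = -1 - 0 by ring, Aux.Lam_parity]
      rw [hm1, Aux.Lam_eval_zero k hk]
      norm_num
    first
    | -- coefficient equality
      (intro n
       have hc : MvPowerSeries.coeff (Finsupp.single 0 n + Finsupp.single 1 k) F
           = PowerSeries.coeff k (PowerSeries.coeff n Aux.F0) := by
         rw [← hF]
         exact (Aux.coeff_sl F n k).symm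
       rw [hc]
       rcases n with _ | m
       · rw [Aux.coeff_F0_zero, PowerSeries.coeff_one, if_neg (by omega), Nat.cast_zero, hQ0]
       · rw [Aux.coeff_F0_succ, PowerSeries.coeff_mul,
           Finset.Nat.sum_antidiagonal_eq_sum_range_succ_mk, hQeval]
         conv_rhs => rw [← Finset.sum_range_reflect]
         refine Finset.sum_congr rfl fun j hj => ?_
         have hjk : j ≤ k := by
           simp only [Finset.mem_range] at hj
           omega
         have hidx : k + 1 - 1 - j = k - j := by omega
         have hkk : k - (k - j) = j := by omega
         rw [hidx, hkk, Aux.coeff_eps, map_add, Aux.coeff_p_eval, Aux.coeff_p_eval, neg_pow]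
         push_cast
         ring)
    | -- parity
      (intro x
       rw [hQeval, hQeval, Finset.mul_sum]
       refine Finset.sum_congr rfl fun i hi => ?_
       rcases Nat.even_or_odd i with he | ho
       · have h1 : (Aux.Lam i).eval (-x) = (Aux.Lam i).eval (x - 1) := by
           rw [show -x = -1 - (x - 1) by ring, Aux.Lam_parity]
         have h2 : (Aux.Lam i).eval (-x - 1) = (Aux.Lam i).eval x := by
           rw [show -x - 1 = -1 - x by ring, Aux.Lam_parity]
         rw [h1, h2, neg_pow]
         have e1 : ((-1 : ℚ))^(k-i) * (-1 : ℚ)^(k-i) = 1 := by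
           rw [← pow_add]
           exact Even.neg_one_pow ⟨k - i, by ring⟩
         have e2 : ((-1 : ℚ))^k * (-1 : ℚ)^(k-i) = 1 := by
           have hik : i ≤ k := by
             simp only [Finset.mem_range] at hi
             omega
           rw [← pow_add]
           refine Even.neg_one_pow ?_
           rcases he with ⟨t, ht⟩
           exact ⟨k - i + t, by omega⟩
         linear_combination (((Nat.factorial (k-i) : ℚ))⁻¹ * x^(k-i) *
             ((Aux.Lam i).eval x + (Aux.Lam i).eval (x - 1))) * e1
           - (((Nat.factorial (k-i) : ℚ))⁻¹ * x^(k-i) *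
             ((Aux.Lam i).eval x + (Aux.Lam i).eval (x - 1))) * e2
       · rw [Aux.Lam_odd i ho]
         simp)
    | exact hQ0
  }

end
end

section
/- Let n ≥ 1 be an integer, s ≥ 0, and let c₁, …, c_s, d₁, …, d_s be real numbers. Set C = Σ_{j=1}^s cⱼ, D = Σ_{j=1}^s dⱼ, and Ã = Σ_{1≤i<j≤s} cⱼ dᵢ. Define F : ℝ → ℝ by F(x) = (∏_{j=1}^{s} exp(cⱼ·(x + n(d₁ + ⋯ + d_{j−1})))) · exp((x + nD)²/(2n)). Then for every integer ℓ ≥ 0, n^ℓ · F^{(ℓ)}(0) = Σ_{i=0}^{⌊ℓ/2⌋} binom(ℓ, 2i) · (2i)!/(2^i i!) · n^{ℓ−i} · (C + D)^{ℓ−2i} · exp(nÃ) · exp(nD²/2), where F^{(ℓ)} denotes the ℓ-th derivative of F. -/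
open scoped BigOperators

noncomputable section

namespace FockAux

def b (ν : ℝ) (ℓ i : ℕ) : ℝ :=
  (ℓ.choose (2*i) : ℝ) * (Nat.factorial (2*i) : ℝ) / (Nat.factorial i * (2*ν)^i)

lemma b_zero (ν : ℝ) (ℓ : ℕ) : b ν ℓ 0 = 1 := by simp [b]

lemma b_eq_zero (ν : ℝ) {ℓ i : ℕ} (h : ℓ < 2*i) : b ν ℓ i = 0 := by
  simp [b, Nat.choose_eq_zero_of_lt h]

lemma choose_nat_id (ℓ i : ℕ) :
    (ℓ+1).choose (2*i+2) * Nat.factorial (2*i+2)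
      = ℓ.choose (2*i+2) * Nat.factorial (2*i+2)
        + 2*(i+1)*(ℓ - 2*i) * (ℓ.choose (2*i) * Nat.factorial (2*i)) := by
  have h1 : ℓ.choose (2*i+1) * (2*i+1) = ℓ.choose (2*i) * (ℓ - 2*i) :=
    Nat.choose_succ_right_eq ℓ (2*i)
  have pascal : (ℓ+1).choose (2*i+2) = ℓ.choose (2*i+1) + ℓ.choose (2*i+2) :=
    Nat.choose_succ_succ ℓ (2*i+1)
  have f2 : Nat.factorial (2*i+2) = (2*i+2)*((2*i+1)*Nat.factorial (2*i)) := by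
    rw [show 2*i+2 = (2*i+1)+1 from rfl, Nat.factorial_succ, Nat.factorial_succ]
  rw [pascal, add_mul, f2]
  have h2 : ℓ.choose (2*i+1) * ((2*i+2)*((2*i+1)*Nat.factorial (2*i)))
      = 2*(i+1)*(ℓ - 2*i) * (ℓ.choose (2*i) * Nat.factorial (2*i)) := by
    calc ℓ.choose (2*i+1) * ((2*i+2)*((2*i+1)*Nat.factorial (2*i)))
        = (ℓ.choose (2*i+1) * (2*i+1)) * ((2*i+2)*Nat.factorial (2*i)) := by ring
      _ = (ℓ.choose (2*i) * (ℓ - 2*i)) * ((2*i+2)*Nat.factorial (2*i)) := by rw [h1]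
      _ = 2*(i+1)*(ℓ - 2*i) * (ℓ.choose (2*i) * Nat.factorial (2*i)) := by ring
  omega

lemma b_rec (ν : ℝ) (hν : ν ≠ 0) (ℓ i : ℕ) :
    b ν (ℓ+1) (i+1) = b ν ℓ (i+1) + ((ℓ - 2*i : ℕ) : ℝ)/ν * b ν ℓ i := by
  have keyR : (((ℓ+1).choose (2*i+2) : ℝ) * Nat.factorial (2*i+2))
      = (ℓ.choose (2*i+2) : ℝ) * Nat.factorial (2*i+2)
        + 2*(i+1)*((ℓ - 2*i : ℕ) : ℝ) * (ℓ.choose (2*i) * Nat.factorial (2*i)) := by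
    exact_mod_cast congrArg (Nat.cast : ℕ → ℝ) (choose_nat_id ℓ i)
  have hfi : (Nat.factorial i : ℝ) ≠ 0 := by exact_mod_cast (Nat.factorial_pos i).ne'
  have h2ν : (2*ν) ≠ 0 := mul_ne_zero two_ne_zero hν
  have h2νi : ((2*ν)^i) ≠ 0 := pow_ne_zero _ h2ν
  calc b ν (ℓ+1) (i+1)
      = (((ℓ+1).choose (2*i+2) : ℝ) * Nat.factorial (2*i+2))
          / (Nat.factorial (i+1) * (2*ν)^(i+1)) := by
        simp [b, show 2*(i+1) = 2*i+2 by ring]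
    _ = ((ℓ.choose (2*i+2) : ℝ) * Nat.factorial (2*i+2)
        + 2*(i+1)*((ℓ - 2*i : ℕ) : ℝ) * (ℓ.choose (2*i) * Nat.factorial (2*i)))
          / (Nat.factorial (i+1) * (2*ν)^(i+1)) := by rw [keyR]
    _ = b ν ℓ (i+1) + ((ℓ - 2*i : ℕ) : ℝ)/ν * b ν ℓ i := by
        simp only [b, show 2*(i+1) = 2*i+2 by ring, Nat.factorial_succ, pow_succ]
        push_cast
        field_simp

lemma key (ν A : ℝ) (hν : ν ≠ 0) (ℓ : ℕ) :
    ∀ x : ℝ, iteratedDeriv ℓ (fun x => Real.exp (x^2/(2*ν) + A*x)) x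
      = (∑ i ∈ Finset.range (ℓ+1), b ν ℓ i * (x/ν + A)^(ℓ - 2*i))
          * Real.exp (x^2/(2*ν) + A*x) := by
  induction ℓ with
  | zero => intro x; simp [b_zero]
  | succ ℓ IH =>
    intro x
    rw [iteratedDeriv_succ, funext IH]
    have hu : HasDerivAt (fun x : ℝ => x/ν + A) (1/ν) x := by
      simpa using ((hasDerivAt_id x).div_const ν).add_const A
    have h1 : HasDerivAt (fun x : ℝ => x^2/(2*ν) + A*x) (x/ν + A) x := by
      have := ((hasDerivAt_pow 2 x).div_const (2*ν)).add ((hasDerivAt_id x).const_mul A)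
      refine this.congr_deriv ?_
      field_simp
      ring
    have hE : HasDerivAt (fun x => Real.exp (x^2/(2*ν) + A*x))
        (Real.exp (x^2/(2*ν) + A*x) * (x/ν + A)) x := h1.exp
    have hP : HasDerivAt
        (fun x => ∑ i ∈ Finset.range (ℓ+1), b ν ℓ i * (x/ν + A)^(ℓ - 2*i))
        (∑ i ∈ Finset.range (ℓ+1),
          b ν ℓ i * ((ℓ - 2*i : ℕ) * (x/ν + A)^(ℓ - 2*i - 1) * (1/ν))) x := by
      apply HasDerivAt.fun_sum
      intro i _
      exact (hu.pow _).const_mul _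
    rw [(hP.fun_mul hE).deriv]
    set u := x/ν + A with hu_def
    set E := Real.exp (x^2/(2*ν) + A*x) with hE_def
    have step1 : (∑ i ∈ Finset.range (ℓ+1), b ν ℓ i * u^(ℓ - 2*i)) * (E * u)
        = (∑ i ∈ Finset.range (ℓ+1), b ν ℓ i * u^(ℓ + 1 - 2*i)) * E := by
      rw [Finset.sum_mul, Finset.sum_mul]
      apply Finset.sum_congr rfl
      intro i _
      rcases le_or_gt (2*i) ℓ with h | h
      · rw [show ℓ + 1 - 2*i = (ℓ - 2*i) + 1 by omega, pow_succ]; ring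
      · rw [b_eq_zero ν h]; ring
    have step2 : (∑ i ∈ Finset.range (ℓ+1), b ν ℓ i * u^(ℓ + 1 - 2*i))
        = b ν ℓ 0 * u^(ℓ+1)
          + ∑ i ∈ Finset.range (ℓ+1), b ν ℓ (i+1) * u^(ℓ - (2*i+1)) := by
      rw [Finset.sum_range_succ' (fun i => b ν ℓ i * u^(ℓ + 1 - 2*i)) ℓ]
      rw [Finset.sum_range_succ]
      rw [b_eq_zero ν (show ℓ < 2*(ℓ+1) by omega)]
      simp only [mul_zero, zero_mul, add_zero, Nat.mul_zero, Nat.sub_zero]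
      rw [add_comm]
      congr 1
      apply Finset.sum_congr rfl
      intro i _
      congr 2
      omega
    have step3 : (∑ i ∈ Finset.range (ℓ+1+1), b ν (ℓ+1) i * u^(ℓ + 1 - 2*i))
        = b ν (ℓ+1) 0 * u^(ℓ+1)
          + ∑ i ∈ Finset.range (ℓ+1), b ν (ℓ+1) (i+1) * u^(ℓ - (2*i+1)) := by
      rw [Finset.sum_range_succ' (fun i => b ν (ℓ+1) i * u^(ℓ + 1 - 2*i)) (ℓ+1)]
      rw [add_comm]
      congr 1
      apply Finset.sum_congr rfl
      intro i _
      congr 2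
      omega
    have step4 : (∑ i ∈ Finset.range (ℓ+1), b ν (ℓ+1) (i+1) * u^(ℓ - (2*i+1)))
        = (∑ i ∈ Finset.range (ℓ+1), b ν ℓ (i+1) * u^(ℓ - (2*i+1)))
          + ∑ i ∈ Finset.range (ℓ+1),
              b ν ℓ i * ((ℓ - 2*i : ℕ) * u^(ℓ - 2*i - 1) * (1/ν)) := by
      rw [← Finset.sum_add_distrib]
      apply Finset.sum_congr rfl
      intro i _
      rw [b_rec ν hν ℓ i, show ℓ - 2*i - 1 = ℓ - (2*i+1) by omega]
      ring
    rw [step1, step3, step2, step4, b_zero, b_zero]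
    ring

lemma iter_const_mul (K : ℝ) (f : ℝ → ℝ) (ℓ : ℕ) :
    iteratedDeriv ℓ (fun x => K * f x) = fun x => K * iteratedDeriv ℓ f x := by
  induction ℓ with
  | zero => simp
  | succ ℓ IH =>
    rw [iteratedDeriv_succ, IH, iteratedDeriv_succ]
    funext x
    exact deriv_const_mul_field K

end FockAux

/-- The Fock-space vacuum expectation identity
`⟨0| αₙ^ℓ ∏ⱼ (e^{cⱼα₋ₙ} e^{dⱼαₙ}) e^{α₋ₙ²/2n} |0⟩`, realized in the one-mode
representation where `α₋ₙ` is multiplication by `x` and `αₙ` is `n·d/dx`: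
for `F(x) = (∏ⱼ exp(cⱼ(x + n(d₁ + ⋯ + d_{j-1})))) · exp((x + nD)²/(2n))` one has
`n^ℓ F^{(ℓ)}(0) = Σ_{i=0}^{⌊ℓ/2⌋} binom(ℓ,2i) (2i)!/(2^i i!) n^{ℓ-i} (C+D)^{ℓ-2i}
e^{nÃ} e^{nD²/2}`. -/
theorem fock_vacuum_expectation
    (n : ℕ) (hn : 1 ≤ n) (s : ℕ) (c d : Fin s → ℝ) (ℓ : ℕ) :
    (n : ℝ) ^ ℓ *
      iteratedDeriv ℓ (fun x : ℝ =>
        (∏ j : Fin s,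
          Real.exp (c j * (x + n * ∑ i ∈ Finset.univ.filter (· < j), d i))) *
        Real.exp ((x + n * ∑ j, d j) ^ 2 / (2 * n))) 0 =
    ∑ i ∈ Finset.range (ℓ / 2 + 1),
      (ℓ.choose (2 * i) : ℝ) *
      ((Nat.factorial (2 * i) : ℝ) / (2 ^ i * Nat.factorial i)) *
      (n : ℝ) ^ (ℓ - i) *
      (∑ j, c j + ∑ j, d j) ^ (ℓ - 2 * i) *
      Real.exp (n * ∑ j : Fin s, ∑ i ∈ Finset.univ.filter (· < j), c j * d i) *
      Real.exp (n * (∑ j, d j) ^ 2 / 2) := by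
  have hν : (n : ℝ) ≠ 0 := by positivity
  set ν : ℝ := (n : ℝ) with hν_def
  set A : ℝ := ∑ j, c j + ∑ j, d j with hA_def
  set K : ℝ := Real.exp (ν * ∑ j : Fin s, ∑ i ∈ Finset.univ.filter (· < j), c j * d i) *
      Real.exp (ν * (∑ j, d j) ^ 2 / 2) with hK_def
  -- rewrite the function
  have hfun : (fun x : ℝ =>
        (∏ j : Fin s,
          Real.exp (c j * (x + ν * ∑ i ∈ Finset.univ.filter (· < j), d i))) *
        Real.exp ((x + ν * ∑ j, d j) ^ 2 / (2 * ν)))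
      = fun x : ℝ => K * Real.exp (x^2/(2*ν) + A*x) := by
    funext x
    rw [← Real.exp_sum, hK_def, ← Real.exp_add, ← Real.exp_add, ← Real.exp_add]
    congr 1
    have hsum : (∑ j : Fin s, c j * (x + ν * ∑ i ∈ Finset.univ.filter (· < j), d i))
        = (∑ j, c j) * x
          + ν * ∑ j : Fin s, ∑ i ∈ Finset.univ.filter (· < j), c j * d i := by
      have h1 : ∀ j : Fin s, c j * (x + ν * ∑ i ∈ Finset.univ.filter (· < j), d i)
          = c j * x + ν * ∑ i ∈ Finset.univ.filter (· < j), c j * d i := by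
        intro j
        rw [← Finset.mul_sum]
        ring
      rw [Finset.sum_congr rfl (fun j _ => h1 j), Finset.sum_add_distrib,
        ← Finset.sum_mul, ← Finset.mul_sum]
    rw [hsum]
    field_simp
    ring
  rw [hfun, FockAux.iter_const_mul]
  simp only []
  rw [FockAux.key ν A hν ℓ 0]
  simp only [zero_div, zero_add, zero_pow, mul_zero, add_zero, Real.exp_zero, mul_one,
    ne_eq, OfNat.ofNat_ne_zero, not_false_eq_true]
  -- now: ν^ℓ * (K * ∑ i ∈ range (ℓ+1), b ν ℓ i * A^(ℓ-2i)) = RHS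
  have hext : (∑ i ∈ Finset.range (ℓ / 2 + 1),
        (ℓ.choose (2 * i) : ℝ) *
        ((Nat.factorial (2 * i) : ℝ) / (2 ^ i * Nat.factorial i)) *
        ν ^ (ℓ - i) * A ^ (ℓ - 2 * i) *
        Real.exp (ν * ∑ j : Fin s, ∑ i ∈ Finset.univ.filter (· < j), c j * d i) *
        Real.exp (ν * (∑ j, d j) ^ 2 / 2))
      = ∑ i ∈ Finset.range (ℓ + 1),
        (ℓ.choose (2 * i) : ℝ) *
        ((Nat.factorial (2 * i) : ℝ) / (2 ^ i * Nat.factorial i)) *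
        ν ^ (ℓ - i) * A ^ (ℓ - 2 * i) *
        Real.exp (ν * ∑ j : Fin s, ∑ i ∈ Finset.univ.filter (· < j), c j * d i) *
        Real.exp (ν * (∑ j, d j) ^ 2 / 2) := by
    apply Finset.sum_subset
    · intro i hi
      simp only [Finset.mem_range] at *
      omega
    · intro i hi hni
      simp only [Finset.mem_range] at hi hni
      have : ℓ < 2 * i := by omega
      rw [Nat.choose_eq_zero_of_lt this]
      simp
  rw [hext, Finset.mul_sum, Finset.mul_sum]
  apply Finset.sum_congr rfl
  intro i hi
  simp only [Finset.mem_range] at hi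
  have hile : i ≤ ℓ := by omega
  rw [FockAux.b]
  have hsplit : ν ^ ℓ = ν ^ (ℓ - i) * ν ^ i := by
    rw [← pow_add]
    congr 1
    omega
  have hfi : (Nat.factorial i : ℝ) ≠ 0 := by exact_mod_cast (Nat.factorial_pos i).ne'
  have h2i : ((2:ℝ) ^ i) ≠ 0 := by positivity
  have hνi : (ν ^ i) ≠ 0 := pow_ne_zero _ hν
  rw [hK_def, mul_pow, hsplit]
  field_simp

end
end

section
/- In ℚ[[q]] one has the identity [ζ⁰]( P^{(2)}(z) · P(2z) ) = (28/5)·G₆(q) − 64·G₄(q)·G₂(q). -/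
open scoped BigOperators

noncomputable section

/-- The `q^N`-coefficient of the constant term (in `ζ`) of a product of `r` propagator
factors.  The `i`-th factor is `Σ_{w} w^(mᵢ+1) (ζ^(tᵢ w) Σ_{h≥0} q^(wh) + ζ^(-tᵢ w)
Σ_{h≥1} q^(wh))`, the sum being over `w ≥ 1` with `allowed i w`. -/
def ctCoeff (r : ℕ) (m t : Fin r → ℕ) (allowed : Fin r → ℕ → Prop) (N : ℕ) : ℚ :=
  ∑ᶠ x ∈ {x : (Fin r → ℕ) × (Fin r → ℕ) × (Fin r → Bool) |
      (∀ i, 1 ≤ x.1 i ∧ allowed i (x.1 i) ∧ (x.2.2 i = false → 1 ≤ x.2.1 i)) ∧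
      (∑ i, (if x.2.2 i then (1 : ℤ) else -1) * (t i : ℤ) * (x.1 i : ℤ)) = 0 ∧
      (∑ i, x.1 i * x.2.1 i) = N},
    ∏ i, (x.1 i : ℚ) ^ (m i + 1)

/-- The constant term `[ζ⁰](F₁ ⋯ F_r)` as a power series in `q`. -/
def ctSeries (r : ℕ) (m t : Fin r → ℕ) (allowed : Fin r → ℕ → Prop) : PowerSeries ℚ :=
  PowerSeries.mk (ctCoeff r m t allowed)

/-- The Eisenstein series `G_(2k)(q) = -B_(2k)/(4k) + Σ_(n≥1) σ_(2k-1)(n) qⁿ`. -/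
def Eis (k : ℕ) : PowerSeries ℚ :=
  PowerSeries.mk fun n =>
    if n = 0 then -(bernoulli (2 * k)) / (4 * k)
    else ∑ e ∈ n.divisors, (e : ℚ) ^ (2 * k - 1)

/-- Substitution `q ↦ q^j` in a power series. -/
def psubst (j : ℕ) (F : PowerSeries ℚ) : PowerSeries ℚ :=
  PowerSeries.mk fun n => if j ∣ n then PowerSeries.coeff (n / j) F else 0
open Finset

namespace CtAux

def sig (k n : ℕ) : ℚ := ∑ d ∈ n.divisors, (d:ℚ)^k

/-- solutions of a*x + b*y = n, p = (a,b,x,y) -/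
def A (n : ℕ) : Finset (ℕ×ℕ×ℕ×ℕ) :=
  ((Icc 1 n) ×ˢ (Icc 1 n) ×ˢ (Icc 1 n) ×ˢ (Icc 1 n)).filter
    (fun p => p.1 * p.2.2.1 + p.2.1 * p.2.2.2 = n)

lemma mem_A {n : ℕ} {p : ℕ×ℕ×ℕ×ℕ} :
    p ∈ A n ↔ 1 ≤ p.1 ∧ 1 ≤ p.2.1 ∧ 1 ≤ p.2.2.1 ∧ 1 ≤ p.2.2.2 ∧
      p.1 * p.2.2.1 + p.2.1 * p.2.2.2 = n := by
  obtain ⟨a, b, x, y⟩ := p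
  simp only [A, mem_filter, mem_product, mem_Icc]
  constructor
  · rintro ⟨⟨⟨h1,-⟩,⟨h2,-⟩,⟨h3,-⟩,h4,-⟩, he⟩
    exact ⟨h1,h2,h3,h4,he⟩
  · rintro ⟨h1,h2,h3,h4,he⟩
    have hax : a ≤ a * x := Nat.le_mul_of_pos_right a h3
    have hby : b ≤ b * y := Nat.le_mul_of_pos_right b h4
    have hxa : x ≤ a * x := Nat.le_mul_of_pos_left x h1
    have hyb : y ≤ b * y := Nat.le_mul_of_pos_left y h2
    exact ⟨⟨⟨h1, by omega⟩, ⟨h2, by omega⟩, ⟨h3, by omega⟩, h4, by omega⟩, he⟩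

def sw (p : ℕ×ℕ×ℕ×ℕ) : ℕ×ℕ×ℕ×ℕ := (p.2.1, p.1, p.2.2.2, p.2.2.1)

lemma sum_sw (n : ℕ) (P : ℕ×ℕ×ℕ×ℕ → Prop) [DecidablePred P] (g : ℕ×ℕ×ℕ×ℕ → ℚ) :
    ∑ p ∈ (A n).filter P, g p = ∑ p ∈ (A n).filter (fun p => P (sw p)), g (sw p) := by
  refine Finset.sum_nbij' sw sw ?_ ?_ ?_ ?_ ?_
  · rintro ⟨a,b,x,y⟩ hp
    rw [mem_filter] at hp ⊢
    simp only [mem_A, sw] at hp ⊢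
    obtain ⟨⟨h1,h2,h3,h4,he⟩, hP⟩ := hp
    exact ⟨⟨h2,h1,h4,h3, by omega⟩, hP⟩
  · rintro ⟨a,b,x,y⟩ hp
    rw [mem_filter] at hp ⊢
    simp only [mem_A, sw] at hp ⊢
    obtain ⟨⟨h1,h2,h3,h4,he⟩, hP⟩ := hp
    exact ⟨⟨h2,h1,h4,h3, by omega⟩, hP⟩
  · rintro ⟨a,b,x,y⟩ _; rfl
  · rintro ⟨a,b,x,y⟩ _; rfl
  · rintro ⟨a,b,x,y⟩ _; rfl

lemma sum_sw_top (n : ℕ) (g : ℕ×ℕ×ℕ×ℕ → ℚ) :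
    ∑ p ∈ A n, g p = ∑ p ∈ A n, g (sw p) := by
  have := sum_sw n (fun _ => True) g
  simpa using this

/-- the key bijection: (a,b,x,y) with x<y  ↦  (a+b,b,x,y-x) with b<a -/
lemma sum_phi (n : ℕ) (g : ℕ×ℕ×ℕ×ℕ → ℚ) :
    ∑ p ∈ (A n).filter (fun p => p.2.2.1 < p.2.2.2),
        g (p.1 + p.2.1, p.2.1, p.2.2.1, p.2.2.2 - p.2.2.1)
      = ∑ p ∈ (A n).filter (fun p => p.2.1 < p.1), g p := by
  refine Finset.sum_nbij'
    (fun p => (p.1 + p.2.1, p.2.1, p.2.2.1, p.2.2.2 - p.2.2.1))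
    (fun p => (p.1 - p.2.1, p.2.1, p.2.2.1, p.2.2.2 + p.2.2.1)) ?_ ?_ ?_ ?_ ?_
  · rintro ⟨a,b,x,y⟩ hp
    simp only [mem_filter, mem_A] at hp ⊢
    obtain ⟨⟨h1,h2,h3,h4,he⟩, hxy⟩ := hp
    refine ⟨⟨by omega, h2, h3, by omega, ?_⟩, by omega⟩
    have hsplit : x + (y - x) = y := by omega
    calc (a+b) * x + b * (y-x) = a*x + b*(x + (y-x)) := by ring
    _ = n := by rw [hsplit]; exact he
  · rintro ⟨a,b,x,y⟩ hp
    simp only [mem_filter, mem_A] at hp ⊢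
    obtain ⟨⟨h1,h2,h3,h4,he⟩, hba⟩ := hp
    refine ⟨⟨by omega, h2, h3, by omega, ?_⟩, by omega⟩
    have hsplit : b + (a - b) = a := by omega
    calc (a-b) * x + b * (y+x) = (b + (a-b))*x + b*y := by ring
    _ = n := by rw [hsplit]; exact he
  · rintro ⟨a,b,x,y⟩ hp
    simp only [mem_filter, mem_A] at hp
    have : a + b - b = a := by omega
    simp only [Prod.mk.injEq]
    refine ⟨by omega, trivial, trivial, by omega⟩
  · rintro ⟨a,b,x,y⟩ hp
    simp only [mem_filter, mem_A] at hp
    simp only [Prod.mk.injEq]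
    refine ⟨by omega, trivial, trivial, by omega⟩
  · rintro ⟨a,b,x,y⟩ _; rfl

/-- three-way split of a sum over `A n` according to comparison of two ℕ-valued coords -/
lemma split3 (n : ℕ) (g : ℕ×ℕ×ℕ×ℕ → ℚ) (c d : ℕ×ℕ×ℕ×ℕ → ℕ) :
    ∑ p ∈ A n, g p = ∑ p ∈ (A n).filter (fun p => d p < c p), g p
      + ∑ p ∈ (A n).filter (fun p => c p < d p), g p
      + ∑ p ∈ (A n).filter (fun p => c p = d p), g p := by
  rw [← Finset.sum_filter_add_sum_filter_not (A n) (fun p => d p < c p) g]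
  rw [← Finset.sum_filter_add_sum_filter_not ((A n).filter (fun p => ¬ d p < c p))
        (fun p => c p < d p) g, Finset.filter_filter, Finset.filter_filter]
  rw [add_assoc]
  congr 1
  congr 1
  · apply Finset.sum_congr _ (fun _ _ => rfl)
    apply Finset.filter_congr
    intro p _
    constructor
    · rintro ⟨-, h⟩; exact h
    · intro h; exact ⟨by omega, h⟩
  · apply Finset.sum_congr _ (fun _ _ => rfl)
    apply Finset.filter_congr
    intro p _
    constructor
    · rintro ⟨h1, h2⟩; omega
    · intro h; omega

lemma sigma_nat_ext {α β : Type*} {x y : (_ : α) × β} (h1 : x.1 = y.1) (h2 : x.2 = y.2) : x = y := by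
  cases x; cases y; cases h1; cases h2; rfl

/-- sum over the part x = y of `A n`, reindexed by d = a+b -/
lemma sum_xeq (n : ℕ) (g : ℕ → ℕ → ℚ) :
    ∑ p ∈ (A n).filter (fun p => p.2.2.1 = p.2.2.2), g p.1 p.2.1
      = ∑ d ∈ n.divisors, ∑ a ∈ Ico 1 d, g a (d - a) := by
  rw [Finset.sum_sigma']
  refine Finset.sum_nbij'
    (fun p => (⟨p.1 + p.2.1, p.1⟩ : (_ : ℕ) × ℕ))
    (fun q => (q.2, q.1 - q.2, n / q.1, n / q.1)) ?_ ?_ ?_ ?_ ?_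
  · rintro ⟨a,b,x,y⟩ hp
    simp only [mem_filter, mem_A] at hp
    obtain ⟨⟨h1,h2,h3,h4,he⟩, hxy⟩ := hp
    subst hxy
    simp only [Finset.mem_sigma, Nat.mem_divisors, mem_Ico]
    have heq : (a + b) * x = n := by rw [add_mul]; exact he
    have hpos : 0 < a * x := Nat.mul_pos h1 h3
    refine ⟨⟨⟨x, heq.symm⟩, by omega⟩, h1, by omega⟩
  · rintro ⟨d, a⟩ hq
    simp only [Finset.mem_sigma, Nat.mem_divisors, mem_Ico] at hq
    obtain ⟨⟨hdvd, hn0⟩, ha1, had⟩ := hq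
    have hd0 : 0 < d := by omega
    have hnd : 0 < n / d := Nat.div_pos (Nat.le_of_dvd (Nat.pos_of_ne_zero hn0) hdvd) hd0
    simp only [mem_filter, mem_A]
    refine ⟨⟨ha1, by omega, hnd, hnd, ?_⟩, trivial⟩
    have hs : a + (d - a) = d := by omega
    calc a * (n/d) + (d-a) * (n/d) = (a + (d-a)) * (n/d) := by ring
    _ = d * (n/d) := by rw [hs]
    _ = n := Nat.mul_div_cancel' hdvd
  · rintro ⟨a,b,x,y⟩ hp
    simp only [mem_filter, mem_A] at hp
    obtain ⟨⟨h1,h2,h3,h4,he⟩, hxy⟩ := hp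
    subst hxy
    have heq : (a + b) * x = n := by rw [add_mul]; exact he
    have hx : n / (a + b) = x := by
      rw [← heq]; exact Nat.mul_div_cancel_left x (by omega)
    have hb : a + b - a = b := by omega
    show ((a, a + b - a, n / (a+b), n / (a+b)) : ℕ×ℕ×ℕ×ℕ) = (a,b,x,x)
    rw [hx, hb]
  · rintro ⟨d, a⟩ hq
    simp only [Finset.mem_sigma, Nat.mem_divisors, mem_Ico] at hq
    exact sigma_nat_ext (by dsimp only; omega) (by dsimp only)
  · rintro ⟨a,b,x,y⟩ hp
    simp only [mem_filter, mem_A] at hp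
    obtain ⟨⟨h1,h2,h3,h4,he⟩, hxy⟩ := hp
    have hb : a + b - a = b := by omega
    show g a b = g a (a + b - a)
    rw [hb]

/-- sum over the part a = b of `A n`, reindexed by divisors -/
lemma sum_aeq (n : ℕ) (g : ℕ → ℚ) :
    ∑ p ∈ (A n).filter (fun p => p.1 = p.2.1), g p.1
      = ∑ d ∈ n.divisors, ((n / d - 1 : ℕ) : ℚ) * g d := by
  have hco : ∀ d ∈ n.divisors, ((n / d - 1 : ℕ) : ℚ) * g d = ∑ x ∈ Ico 1 (n / d), g d := by
    intro d _
    rw [Finset.sum_const, Nat.card_Ico, nsmul_eq_mul]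
  rw [Finset.sum_congr rfl hco, Finset.sum_sigma']
  refine Finset.sum_nbij'
    (fun p => (⟨p.1, p.2.2.1⟩ : (_ : ℕ) × ℕ))
    (fun q => (q.1, q.1, q.2, n / q.1 - q.2)) ?_ ?_ ?_ ?_ ?_
  · rintro ⟨a,b,x,y⟩ hp
    simp only [mem_filter, mem_A] at hp
    obtain ⟨⟨h1,h2,h3,h4,he⟩, hab⟩ := hp
    subst hab
    simp only [Finset.mem_sigma, Nat.mem_divisors, mem_Ico]
    have heq : a * (x + y) = n := by rw [mul_add]; exact he
    have hxy : x + y = n / a := by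
      rw [← heq]; exact (Nat.mul_div_cancel_left (x+y) (by omega)).symm
    have hpos : 0 < a * x := Nat.mul_pos h1 h3
    refine ⟨⟨⟨x + y, heq.symm⟩, by omega⟩, h3, by omega⟩
  · rintro ⟨d, x⟩ hq
    simp only [Finset.mem_sigma, Nat.mem_divisors, mem_Ico] at hq
    obtain ⟨⟨hdvd, hn0⟩, hx1, hxd⟩ := hq
    have hd0 : 0 < d := Nat.pos_of_mem_divisors (Nat.mem_divisors.2 ⟨hdvd, hn0⟩)
    simp only [mem_filter, mem_A]
    refine ⟨⟨hd0, hd0, hx1, by omega, ?_⟩, trivial⟩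
    have hs : x + (n / d - x) = n / d := by omega
    calc d * x + d * (n/d - x) = d * (x + (n/d - x)) := by ring
    _ = d * (n/d) := by rw [hs]
    _ = n := Nat.mul_div_cancel' hdvd
  · rintro ⟨a,b,x,y⟩ hp
    simp only [mem_filter, mem_A] at hp
    obtain ⟨⟨h1,h2,h3,h4,he⟩, hab⟩ := hp
    subst hab
    have heq : a * (x + y) = n := by rw [mul_add]; exact he
    have hxy : x + y = n / a := by
      rw [← heq]; exact (Nat.mul_div_cancel_left (x+y) (by omega)).symm
    have hy : n / a - x = y := by omega
    show ((a, a, x, n / a - x) : ℕ×ℕ×ℕ×ℕ) = (a,a,x,y)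
    rw [hy]
  · rintro ⟨d, x⟩ hq
    exact sigma_nat_ext (by dsimp only) (by dsimp only)
  · rintro ⟨a,b,x,y⟩ hp
    rfl

lemma sum4_range (d : ℕ) :
    ∑ a ∈ Finset.range d, (a:ℚ)^4
      = (6*(d:ℚ)^5 - 15*(d:ℚ)^4 + 10*(d:ℚ)^3 - d) / 30 := by
  induction d with
  | zero => simp
  | succ k ih =>
    rw [Finset.sum_range_succ, ih]
    push_cast
    ring

lemma sum4_Ico (d : ℕ) :
    ∑ a ∈ Ico 1 d, (a:ℚ)^4
      = (6*(d:ℚ)^5 - 15*(d:ℚ)^4 + 10*(d:ℚ)^3 - d) / 30 := by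
  rw [← sum4_range d, Finset.range_eq_Ico]
  rcases Nat.eq_zero_or_pos d with h | h
  · subst h; rfl
  · rw [Finset.sum_eq_sum_Ico_succ_bot h]
    norm_num

/-- the central evaluation: `∑_{ax+by=n} a³ b` in closed form. -/
lemma T31_eval (n : ℕ) :
    ∑ p ∈ A n, (p.1:ℚ)^3 * p.2.1
      = (21 * sig 5 n + 10 * sig 3 n - 30 * n * sig 3 n - sig 1 n) / 240 := by
  set T31 := ∑ p ∈ A n, (p.1:ℚ)^3 * p.2.1 with hT31
  -- names for region sums
  set Sgt_a4 := ∑ p ∈ (A n).filter (fun p => p.2.1 < p.1), (p.1:ℚ)^4 with hSgta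
  set Sgt_b4 := ∑ p ∈ (A n).filter (fun p => p.2.1 < p.1), (p.2.1:ℚ)^4 with hSgtb
  set Xlt_a4 := ∑ p ∈ (A n).filter (fun p => p.2.2.1 < p.2.2.2), (p.1:ℚ)^4 with hXlta
  set Xlt_b4 := ∑ p ∈ (A n).filter (fun p => p.2.2.1 < p.2.2.2), (p.2.1:ℚ)^4 with hXltb
  set T40 := ∑ p ∈ A n, (p.1:ℚ)^4 with hT40
  set P4 := ∑ d ∈ n.divisors, ∑ a ∈ Ico 1 d, (a:ℚ)^4 with hP4
  set Q4 := ∑ d ∈ n.divisors, ((d - 1 : ℕ) : ℚ) * (d:ℚ)^4 with hQ4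
  set R4 := ∑ d ∈ n.divisors, ((n / d - 1 : ℕ) : ℚ) * (d:ℚ)^4 with hR4
  set E := ∑ p ∈ A n, ((p.1:ℚ) - p.2.1)^4 with hE
  set F := ∑ p ∈ A n, ((p.1:ℚ) + p.2.1)^4 with hF
  -- step 1 : E - F = -16 T31
  have swapT : ∑ p ∈ A n, (p.1:ℚ) * (p.2.1:ℚ)^3 = T31 := by
    rw [hT31, sum_sw_top n (fun p => (p.1:ℚ)^3 * p.2.1)]
    exact Finset.sum_congr rfl (fun p _ => by simp only [sw]; ring)
  have step1 : E - F = -16 * T31 := by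
    rw [hE, hF, ← Finset.sum_sub_distrib]
    have : ∀ p ∈ A n, ((p.1:ℚ) - p.2.1)^4 - ((p.1:ℚ) + p.2.1)^4
        = (-8) * ((p.1:ℚ)^3 * p.2.1) + (-8) * ((p.1:ℚ) * (p.2.1:ℚ)^3) := by
      intro p _; ring
    rw [Finset.sum_congr rfl this, Finset.sum_add_distrib, ← Finset.mul_sum, ← Finset.mul_sum,
      swapT, ← hT31]
    ring
  -- step 2 : E = 2 Σ_{b<a} (a-b)^4
  have step2 : E = 2 * ∑ p ∈ (A n).filter (fun p => p.2.1 < p.1), ((p.1:ℚ) - p.2.1)^4 := by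
    rw [hE, split3 n _ (fun p => p.1) (fun p => p.2.1)]
    have hz : ∑ p ∈ (A n).filter (fun p => p.1 = p.2.1), ((p.1:ℚ) - p.2.1)^4 = 0 := by
      apply Finset.sum_eq_zero
      intro p hp
      simp only [mem_filter] at hp
      rw [hp.2, sub_self]
      norm_num
    have hsw := sum_sw n (fun p => p.1 < p.2.1) (fun p => ((p.1:ℚ) - p.2.1)^4)
    simp only [sw] at hsw
    have hsw2 : ∑ p ∈ (A n).filter (fun p => p.1 < p.2.1), ((p.1:ℚ) - p.2.1)^4
        = ∑ p ∈ (A n).filter (fun p => p.2.1 < p.1), ((p.1:ℚ) - p.2.1)^4 := by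
      rw [hsw]
      exact Finset.sum_congr rfl (fun p _ => by ring)
    rw [hz, add_zero, hsw2]
    ring
  -- step 3 : Σ_{b<a} (a-b)^4 = Xlt_a4
  have step3 : ∑ p ∈ (A n).filter (fun p => p.2.1 < p.1), ((p.1:ℚ) - p.2.1)^4 = Xlt_a4 := by
    rw [← sum_phi n (fun p => ((p.1:ℚ) - p.2.1)^4), hXlta]
    apply Finset.sum_congr rfl
    intro p _
    push_cast
    ring
  -- step 4 : T40 = Xlt_b4 + Xlt_a4 + P4
  have hXgt : ∑ p ∈ (A n).filter (fun p => p.2.2.2 < p.2.2.1), (p.1:ℚ)^4 = Xlt_b4 := by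
    have := sum_sw n (fun p => p.2.2.2 < p.2.2.1) (fun p => (p.1:ℚ)^4)
    simp only [sw] at this
    rw [this, hXltb]
    rfl
  have step4 : T40 = Xlt_b4 + Xlt_a4 + P4 := by
    rw [hT40, split3 n _ (fun p => p.2.2.1) (fun p => p.2.2.2), hXgt]
    congr 1
    exact sum_xeq n (fun a b => (a:ℚ)^4)
  -- step 5 : Xlt_b4 = Sgt_b4
  have step5 : Xlt_b4 = Sgt_b4 := by
    rw [hXltb, hSgtb, ← sum_phi n (fun p => (p.2.1:ℚ)^4)]
  -- step 6 : F = 2 Sgt_a4 + Q4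
  have hXgtF : ∑ p ∈ (A n).filter (fun p => p.2.2.2 < p.2.2.1), ((p.1:ℚ) + p.2.1)^4
      = ∑ p ∈ (A n).filter (fun p => p.2.2.1 < p.2.2.2), ((p.1:ℚ) + p.2.1)^4 := by
    have := sum_sw n (fun p => p.2.2.2 < p.2.2.1) (fun p => ((p.1:ℚ) + p.2.1)^4)
    simp only [sw] at this
    rw [this]
    exact Finset.sum_congr rfl (fun p _ => by ring)
  have hXltF : ∑ p ∈ (A n).filter (fun p => p.2.2.1 < p.2.2.2), ((p.1:ℚ) + p.2.1)^4
      = Sgt_a4 := by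
    rw [hSgta, ← sum_phi n (fun p => (p.1:ℚ)^4)]
    apply Finset.sum_congr rfl
    intro p _
    push_cast
    ring
  have hXeqF : ∑ p ∈ (A n).filter (fun p => p.2.2.1 = p.2.2.2), ((p.1:ℚ) + p.2.1)^4
      = Q4 := by
    rw [sum_xeq n (fun a b => ((a:ℚ) + b)^4), hQ4]
    apply Finset.sum_congr rfl
    intro d _
    have : ∀ a ∈ Ico 1 d, ((a:ℚ) + ((d - a : ℕ):ℚ))^4 = (d:ℚ)^4 := by
      intro a ha
      simp only [mem_Ico] at ha
      have : ((d - a : ℕ):ℚ) = (d:ℚ) - a := by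
        have : a ≤ d := by omega
        push_cast [this]
        ring
      rw [this]
      ring_nf
    rw [Finset.sum_congr rfl this, Finset.sum_const, Nat.card_Ico, nsmul_eq_mul]
  have step6 : F = 2 * Sgt_a4 + Q4 := by
    rw [hF, split3 n _ (fun p => p.2.2.1) (fun p => p.2.2.2), hXgtF, hXltF, hXeqF]
    ring
  -- step 7 : Sgt_a4 + Sgt_b4 = T40 - R4
  have step7 : Sgt_a4 + Sgt_b4 = T40 - R4 := by
    have hlt : ∑ p ∈ (A n).filter (fun p => p.1 < p.2.1), (p.1:ℚ)^4 = Sgt_b4 := by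
      have := sum_sw n (fun p => p.1 < p.2.1) (fun p => (p.1:ℚ)^4)
      simp only [sw] at this
      rw [this, hSgtb]
      rfl
    have heq : ∑ p ∈ (A n).filter (fun p => p.1 = p.2.1), (p.1:ℚ)^4 = R4 := by
      rw [sum_aeq n (fun a => (a:ℚ)^4), hR4]
    have := split3 n (fun p => (p.1:ℚ)^4) (fun p => p.1) (fun p => p.2.1)
    rw [← hT40] at this
    rw [this, hlt, heq]
    ring
  -- evaluate P4, Q4, R4
  have hP4v : P4 = (6 * sig 5 n - 15 * sig 4 n + 10 * sig 3 n - sig 1 n) / 30 := by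
    rw [hP4, sig, sig, sig, sig]
    rw [Finset.sum_congr rfl (fun d _ => sum4_Ico d)]
    have : ∀ d ∈ n.divisors, (6*(d:ℚ)^5 - 15*(d:ℚ)^4 + 10*(d:ℚ)^3 - d) / 30
        = (1/5)*(d:ℚ)^5 - (1/2)*(d:ℚ)^4 + (1/3)*(d:ℚ)^3 - (1/30)*(d:ℚ)^1 := by
      intro d _; ring
    rw [Finset.sum_congr rfl this, Finset.sum_sub_distrib, Finset.sum_add_distrib,
      Finset.sum_sub_distrib, ← Finset.mul_sum, ← Finset.mul_sum, ← Finset.mul_sum,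
      ← Finset.mul_sum]
    ring
  have hQ4v : Q4 = sig 5 n - sig 4 n := by
    rw [hQ4, sig, sig, ← Finset.sum_sub_distrib]
    apply Finset.sum_congr rfl
    intro d hd
    have hd1 : 1 ≤ d := Nat.pos_of_mem_divisors hd
    have : ((d - 1 : ℕ):ℚ) = (d:ℚ) - 1 := by push_cast [hd1]; ring
    rw [this]
    ring
  have hR4v : R4 = n * sig 3 n - sig 4 n := by
    rw [hR4, sig, sig, Finset.mul_sum, ← Finset.sum_sub_distrib]
    apply Finset.sum_congr rfl
    intro d hd
    obtain ⟨hdvd, hn0⟩ := Nat.mem_divisors.1 hd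
    have hd1 : 1 ≤ d := Nat.pos_of_mem_divisors hd
    have hnd1 : 1 ≤ n / d := Nat.div_pos (Nat.le_of_dvd (Nat.pos_of_ne_zero hn0) hdvd) hd1
    have hcast : ((n / d : ℕ):ℚ) * (d:ℚ) = (n:ℚ) := by
      rw [← Nat.cast_mul, Nat.div_mul_cancel hdvd]
    have : ((n / d - 1 : ℕ):ℚ) = ((n / d : ℕ):ℚ) - 1 := by push_cast [hnd1]; ring
    rw [this]
    have : (((n / d : ℕ):ℚ) - 1) * (d:ℚ)^4 = (((n / d : ℕ):ℚ) * (d:ℚ)) * (d:ℚ)^3 - (d:ℚ)^4 := by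
      ring
    rw [this, hcast]
  -- assemble
  have main : -16 * T31 = 2 * R4 - 2 * P4 - Q4 := by
    rw [← step1, step2, step3, step6]
    have hXlta_v : Xlt_a4 = T40 - Xlt_b4 - P4 := by rw [step4]; ring
    rw [hXlta_v, step5]
    have : Sgt_b4 = T40 - R4 - Sgt_a4 := by rw [← step7]; ring
    rw [this]
    ring
  rw [hP4v, hQ4v, hR4v] at main
  linarith

/-- `sig` as a sum over `divisorsAntidiagonal`. -/
lemma sig_eq_anti (k n : ℕ) : sig k n = ∑ q ∈ n.divisorsAntidiagonal, (q.1:ℚ)^k := by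
  rw [sig, ← Nat.sum_divisorsAntidiagonal (fun d e => (d:ℚ)^k)]

/-- the convolution `Σ_{1≤k≤n-1} σ₃(k) σ₁(n-k)` equals the sum over `A n`. -/
lemma T31_conv (n : ℕ) :
    ∑ p ∈ A n, (p.1:ℚ)^3 * p.2.1 = ∑ k ∈ Ico 1 n, sig 3 k * sig 1 (n - k) := by
  have hterm : ∀ k ∈ Ico 1 n, sig 3 k * sig 1 (n - k)
      = ∑ q ∈ (k.divisorsAntidiagonal ×ˢ (n-k).divisorsAntidiagonal),
          (q.1.1:ℚ)^3 * q.2.1 := by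
    intro k _
    rw [sig_eq_anti, sig_eq_anti, Finset.sum_mul_sum, Finset.sum_product]
    simp [pow_one]
  rw [Finset.sum_congr rfl hterm, Finset.sum_sigma']
  refine (Finset.sum_nbij'
    (fun q => (q.2.1.1, q.2.2.1, q.2.1.2, q.2.2.2))
    (fun p => (⟨p.1 * p.2.2.1, ((p.1, p.2.2.1), (p.2.1, p.2.2.2))⟩ :
      (_ : ℕ) × ((ℕ×ℕ)×(ℕ×ℕ)))) ?_ ?_ ?_ ?_ ?_).symm
  · rintro ⟨k, ⟨⟨a,x⟩, ⟨b,y⟩⟩⟩ hq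
    simp only [Finset.mem_sigma, Finset.mem_product, Nat.mem_divisorsAntidiagonal, mem_Ico] at hq
    obtain ⟨⟨hk1, hkn⟩, ⟨hax, hk0⟩, hby, hnk0⟩ := hq
    simp only [mem_A]
    have haxne : a * x ≠ 0 := by omega
    have hbyne : b * y ≠ 0 := by omega
    obtain ⟨ha, hx⟩ := Nat.mul_ne_zero_iff.1 haxne
    obtain ⟨hb, hy⟩ := Nat.mul_ne_zero_iff.1 hbyne
    exact ⟨by omega, by omega, by omega, by omega, by omega⟩
  · rintro ⟨a,b,x,y⟩ hp
    simp only [mem_A] at hp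
    obtain ⟨h1,h2,h3,h4,he⟩ := hp
    have hax : 0 < a * x := Nat.mul_pos h1 h3
    have hby : 0 < b * y := Nat.mul_pos h2 h4
    simp only [Finset.mem_sigma, Finset.mem_product, Nat.mem_divisorsAntidiagonal, mem_Ico]
    refine ⟨⟨?_, ?_⟩, ⟨trivial, ?_⟩, ?_, ?_⟩ <;> omega
  · rintro ⟨k, ⟨⟨a,x⟩, ⟨b,y⟩⟩⟩ hq
    simp only [Finset.mem_sigma, Finset.mem_product, Nat.mem_divisorsAntidiagonal, mem_Ico] at hq
    obtain ⟨⟨hk1, hkn⟩, ⟨hax, hk0⟩, hby, hnk0⟩ := hq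
    exact sigma_nat_ext (by dsimp only; omega) rfl
  · rintro ⟨a,b,x,y⟩ hp
    rfl
  · rintro ⟨k, ⟨⟨a,x⟩, ⟨b,y⟩⟩⟩ hq
    rfl

def Bfin (N : ℕ) : Finset (ℕ×ℕ×ℕ×Bool) :=
  ((Icc 1 N) ×ˢ (range (N+1)) ×ˢ (range (N+1)) ×ˢ (univ : Finset Bool)).filter
    (fun p => (p.2.2.2 = false → 1 ≤ p.2.1) ∧ (p.2.2.2 = true → 1 ≤ p.2.2.1) ∧
      2 * p.1 * p.2.1 + p.1 * p.2.2.1 = N)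

lemma mem_Bfin {N : ℕ} {p : ℕ×ℕ×ℕ×Bool} :
    p ∈ Bfin N ↔ 1 ≤ p.1 ∧ (p.2.2.2 = false → 1 ≤ p.2.1) ∧ (p.2.2.2 = true → 1 ≤ p.2.2.1) ∧
      2 * p.1 * p.2.1 + p.1 * p.2.2.1 = N := by
  obtain ⟨v, h0, h1, c⟩ := p
  simp only [Bfin, mem_filter, mem_product, mem_Icc, mem_range, Finset.mem_univ, and_true]
  constructor
  · rintro ⟨⟨⟨hv1, -⟩, -, -⟩, hc⟩
    exact ⟨hv1, hc⟩
  · rintro ⟨hv1, hc0, hc1, he⟩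
    have hpos : 1 ≤ 2 * h0 + h1 := by
      cases c with
      | false => have := hc0 rfl; omega
      | true => have := hc1 rfl; omega
    have hve : v * (2 * h0 + h1) = N := by rw [← he]; ring
    have hvN : v ≤ N := by
      calc v ≤ v * (2 * h0 + h1) := Nat.le_mul_of_pos_right v hpos
      _ = N := hve
    have h0N : 2 * v * h0 ≤ N := by omega
    have h0le : h0 ≤ 2 * v * h0 := Nat.le_mul_of_pos_left h0 (by omega)
    have h1N : v * h1 ≤ N := by omega
    have h1le : h1 ≤ v * h1 := Nat.le_mul_of_pos_left h1 (by omega)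
    exact ⟨⟨⟨hv1, hvN⟩, by omega, by omega⟩, hc0, hc1, he⟩

def Psi (p : ℕ×ℕ×ℕ×Bool) : (Fin 2 → ℕ) × (Fin 2 → ℕ) × (Fin 2 → Bool) :=
  (![2*p.1, p.1], ![p.2.1, p.2.2.1], ![p.2.2.2, !p.2.2.2])

lemma Psi_inj : Function.Injective Psi := by
  rintro ⟨v,h0,h1,c⟩ ⟨v',h0',h1',c'⟩ h
  have hv := congrFun (congrArg Prod.fst h) 1
  have hh0 := congrFun (congrArg (fun z => z.2.1) h) 0
  have hh1 := congrFun (congrArg (fun z => z.2.1) h) 1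
  have hc := congrFun (congrArg (fun z => z.2.2) h) 0
  simp only [Psi, Matrix.cons_val_zero, Matrix.cons_val_one, Matrix.head_cons] at hv hh0 hh1 hc
  simp [Prod.ext_iff, hv, hh0, hh1, hc]

/-- the solution set of the constant-term condition is the image of `Bfin`. -/
lemma setS_eq (N : ℕ) :
    {x : (Fin 2 → ℕ) × (Fin 2 → ℕ) × (Fin 2 → Bool) |
      (∀ i, 1 ≤ x.1 i ∧ (fun (_ : Fin 2) (_ : ℕ) => True) i (x.1 i) ∧
        (x.2.2 i = false → 1 ≤ x.2.1 i)) ∧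
      (∑ i, (if x.2.2 i then (1 : ℤ) else -1) * ((![1,2] : Fin 2 → ℕ) i : ℤ) * (x.1 i : ℤ)) = 0 ∧
      (∑ i, x.1 i * x.2.1 i) = N} = Psi '' ↑(Bfin N) := by
  ext x
  simp only [Set.mem_setOf_eq, Set.mem_image, Finset.mem_coe]
  constructor
  · rintro ⟨hw, hz, hq⟩
    rw [Fin.sum_univ_two] at hz hq
    simp only [Matrix.cons_val_zero, Matrix.cons_val_one, Matrix.head_cons] at hz
    obtain ⟨hw0, -, hh0⟩ := hw 0
    obtain ⟨hw1, -, hh1⟩ := hw 1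
    have hxeq : x = (x.1, x.2.1, x.2.2) := rfl
    cases hs0 : x.2.2 0 <;> cases hs1 : x.2.2 1 <;> rw [hs0, hs1] at hz <;>
      simp only [Bool.false_eq_true, if_true, if_false, Nat.cast_one, Nat.cast_ofNat,
        one_mul, neg_mul, neg_neg] at hz
    · -- both false : impossible
      exfalso; omega
    · -- s0 = false, s1 = true : w0 = 2 w1
      have hw01 : x.1 0 = 2 * x.1 1 := by omega
      rw [hw01] at hq
      refine ⟨(x.1 1, x.2.1 0, x.2.1 1, false), ?_, ?_⟩
      · rw [mem_Bfin]
        refine ⟨hw1, fun _ => hh0 hs0, fun h => by simp at h, ?_⟩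
        show 2 * x.1 1 * x.2.1 0 + x.1 1 * x.2.1 1 = N
        omega
      · rw [hxeq, Psi]
        refine Prod.ext ?_ (Prod.ext ?_ ?_) <;> funext i <;> fin_cases i <;>
          simp [hw01, hs0, hs1]
    · -- s0 = true, s1 = false : w0 = 2 w1
      have hw01 : x.1 0 = 2 * x.1 1 := by omega
      rw [hw01] at hq
      refine ⟨(x.1 1, x.2.1 0, x.2.1 1, true), ?_, ?_⟩
      · rw [mem_Bfin]
        refine ⟨hw1, fun h => by simp at h, fun _ => hh1 hs1, ?_⟩
        show 2 * x.1 1 * x.2.1 0 + x.1 1 * x.2.1 1 = N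
        omega
      · rw [hxeq, Psi]
        refine Prod.ext ?_ (Prod.ext ?_ ?_) <;> funext i <;> fin_cases i <;>
          simp [hw01, hs0, hs1]
    · -- both true : impossible
      exfalso; omega
  · rintro ⟨⟨v,h0,h1,c⟩, hp, rfl⟩
    rw [mem_Bfin] at hp
    obtain ⟨hv1, hc0, hc1, he⟩ := hp
    dsimp only at hv1 hc0 hc1 he
    refine ⟨?_, ?_, ?_⟩
    · intro i
      fin_cases i <;> cases c <;>
        simp_all [Psi, Matrix.cons_val_zero, Matrix.cons_val_one, Matrix.head_cons] <;> omega
    · rw [Fin.sum_univ_two]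
      cases c <;>
        simp [Psi, Matrix.cons_val_zero, Matrix.cons_val_one, Matrix.head_cons]
    · rw [Fin.sum_univ_two]
      simp only [Psi, Matrix.cons_val_zero, Matrix.cons_val_one, Matrix.head_cons]
      omega

lemma Bfin_sum (N : ℕ) :
    ∑ p ∈ Bfin N, (2*(p.1:ℚ))^3 * (p.1:ℚ)
      = ∑ q ∈ N.divisorsAntidiagonal, 8 * (q.1:ℚ)^4 * q.2 := by
  have hterm : ∀ q ∈ N.divisorsAntidiagonal, 8 * ((q:ℕ×ℕ).1:ℚ)^4 * q.2
      = ∑ _j ∈ range q.2, 8 * (q.1:ℚ)^4 := by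
    intro q _
    rw [Finset.sum_const, card_range, nsmul_eq_mul]
    ring
  rw [Finset.sum_congr rfl hterm, Finset.sum_sigma']
  refine (Finset.sum_nbij'
    (fun q => if 2*q.2 < q.1.2 then (q.1.1, q.2, q.1.2 - 2*q.2, true)
      else (q.1.1, q.1.2 - q.2, 2*q.2 - q.1.2, false))
    (fun p => (⟨(p.1, 2*p.2.1 + p.2.2.1), if p.2.2.2 then p.2.1 else p.2.1 + p.2.2.1⟩ :
      (_ : ℕ×ℕ) × ℕ)) ?_ ?_ ?_ ?_ ?_).symm
  · rintro ⟨⟨v,e⟩, jj⟩ hq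
    simp only [Finset.mem_sigma, Nat.mem_divisorsAntidiagonal, mem_range] at hq
    obtain ⟨⟨hve, hN0⟩, hje⟩ := hq
    have hv1 : 1 ≤ v := by
      rcases Nat.eq_zero_or_pos v with h | h
      · subst h; rw [zero_mul] at hve; exact absurd hve.symm hN0
      · exact h
    dsimp only
    by_cases hcase : 2*jj < e
    · rw [if_pos hcase, mem_Bfin]
      dsimp only
      refine ⟨hv1, fun h => by simp at h, fun _ => by omega, ?_⟩
      have hs : 2*jj + (e - 2*jj) = e := by omega
      calc 2 * v * jj + v * (e - 2*jj) = v * (2*jj + (e - 2*jj)) := by ring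
      _ = N := by rw [hs]; exact hve
    · rw [if_neg hcase, mem_Bfin]
      dsimp only
      refine ⟨hv1, fun _ => by omega, fun h => by simp at h, ?_⟩
      have hs : 2*(e - jj) + (2*jj - e) = e := by omega
      calc 2 * v * (e - jj) + v * (2*jj - e) = v * (2*(e - jj) + (2*jj - e)) := by ring
      _ = N := by rw [hs]; exact hve
  · rintro ⟨v,h0,h1,c⟩ hp
    rw [mem_Bfin] at hp
    obtain ⟨hv1, hc0, hc1, he⟩ := hp
    dsimp only at hv1 hc0 hc1 he
    have hve : v * (2*h0 + h1) = N := by rw [← he]; ring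
    have hN0 : N ≠ 0 := by
      have hpos : 1 ≤ 2 * h0 + h1 := by
        cases c with
        | false => have := hc0 rfl; omega
        | true => have := hc1 rfl; omega
      have := Nat.mul_pos (by omega : 0 < v) hpos
      omega
    dsimp only
    cases c with
    | true =>
      simp only [if_true]
      refine Finset.mem_sigma.2 ⟨Nat.mem_divisorsAntidiagonal.2 ⟨hve, hN0⟩, mem_range.2 ?_⟩
      show h0 < 2 * h0 + h1
      have := hc1 rfl; omega
    | false =>
      simp only [Bool.false_eq_true, if_false]
      refine Finset.mem_sigma.2 ⟨Nat.mem_divisorsAntidiagonal.2 ⟨hve, hN0⟩, mem_range.2 ?_⟩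
      show h0 + h1 < 2 * h0 + h1
      have := hc0 rfl; omega
  · rintro ⟨⟨v,e⟩, jj⟩ hq
    simp only [Finset.mem_sigma, Nat.mem_divisorsAntidiagonal, mem_range] at hq
    obtain ⟨⟨hve, hN0⟩, hje⟩ := hq
    dsimp only
    by_cases hcase : 2*jj < e
    · rw [if_pos hcase]
      refine sigma_nat_ext ?_ ?_ <;> dsimp only
      · have : 2*jj + (e - 2*jj) = e := by omega
        rw [Prod.mk.injEq]
        exact ⟨rfl, this⟩
      · simp
    · rw [if_neg hcase]
      refine sigma_nat_ext ?_ ?_ <;> dsimp only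
      · have : 2*(e - jj) + (2*jj - e) = e := by omega
        rw [Prod.mk.injEq]
        exact ⟨rfl, this⟩
      · simp only [Bool.false_eq_true, if_false]
        omega
  · rintro ⟨v,h0,h1,c⟩ hp
    rw [mem_Bfin] at hp
    obtain ⟨hv1, hc0, hc1, he⟩ := hp
    dsimp only at hv1 hc0 hc1 he
    dsimp only
    cases c with
    | true =>
      have hh1 : 1 ≤ h1 := hc1 rfl
      simp only [if_true]
      rw [if_pos (by omega)]
      rw [Prod.mk.injEq, Prod.mk.injEq, Prod.mk.injEq]
      exact ⟨rfl, rfl, by omega, rfl⟩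
    | false =>
      have hh0 : 1 ≤ h0 := hc0 rfl
      simp only [Bool.false_eq_true, if_false]
      rw [if_neg (by omega)]
      rw [Prod.mk.injEq, Prod.mk.injEq, Prod.mk.injEq]
      exact ⟨rfl, by omega, by omega, rfl⟩
  · rintro ⟨⟨v,e⟩, jj⟩ hq
    dsimp only
    by_cases hcase : 2*jj < e
    · rw [if_pos hcase]; ring
    · rw [if_neg hcase]; ring

lemma ctCoeff_eval (N : ℕ) :
    ctCoeff 2 ![2,0] ![1,2] (fun _ _ => True) N = 8 * (N : ℚ) * sig 3 N := by
  rw [ctCoeff, setS_eq N, finsum_mem_image (Psi_inj.injOn), finsum_mem_coe_finset]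
  have hval : ∀ p ∈ Bfin N, (∏ i, ((Psi p).1 i : ℚ) ^ ((![2,0] : Fin 2 → ℕ) i + 1))
      = (2*(p.1:ℚ))^3 * (p.1:ℚ) := by
    intro p _
    rw [Fin.prod_univ_two]
    simp only [Psi, Matrix.cons_val_zero, Matrix.cons_val_one, Matrix.head_cons]
    push_cast
    ring
  rw [Finset.sum_congr rfl hval, Bfin_sum]
  rw [Nat.sum_divisorsAntidiagonal (fun d e => 8 * (d:ℚ)^4 * e)]
  rw [sig, Finset.mul_sum]
  apply Finset.sum_congr rfl
  intro d hd
  obtain ⟨hdvd, hn0⟩ := Nat.mem_divisors.1 hd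
  have hcast : ((N / d : ℕ):ℚ) * (d:ℚ) = (N:ℚ) := by
    rw [← Nat.cast_mul, Nat.div_mul_cancel hdvd]
  have : (8:ℚ) * (d:ℚ)^4 * ((N / d : ℕ):ℚ) = 8 * ((((N / d : ℕ)):ℚ) * d) * (d:ℚ)^3 := by
    ring
  rw [this, hcast]

end CtAux


/-- `[ζ⁰](P⁽²⁾(z)·P(2z)) = (28/5)·G₆(q) - 64·G₄(q)·G₂(q)`. -/
theorem ct_P2_P2z :
    ctSeries 2 ![2, 0] ![1, 2] (fun _ _ => True) =
      (28 / 5 : ℚ) • Eis 3 - (64 : ℚ) • (Eis 2 * Eis 1) := by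
  apply PowerSeries.ext
  intro N
  rw [ctSeries, PowerSeries.coeff_mk, CtAux.ctCoeff_eval]
  rw [map_sub]
  rw [PowerSeries.coeff_smul, PowerSeries.coeff_smul]
  have hb2 : bernoulli 2 = 1/6 := by norm_num [bernoulli]
  have hb4 : bernoulli 4 = -(1/30) := by
    have := bernoulli'_four
    norm_num [bernoulli, this]
  have hb6 : bernoulli 6 = 1/42 := by
    have h5 : bernoulli' 5 = 0 := bernoulli'_eq_zero_of_odd (by decide) (by norm_num)
    have h6 : bernoulli' 6 = 1/42 := by
      rw [bernoulli'_def]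
      rw [Finset.sum_range_succ, Finset.sum_range_succ, Finset.sum_range_succ,
        Finset.sum_range_succ, Finset.sum_range_succ, Finset.sum_range_succ]
      norm_num [h5, bernoulli'_zero, bernoulli'_one, bernoulli'_two, bernoulli'_three,
        bernoulli'_four, Nat.choose]
    norm_num [bernoulli, h6]
  rcases Nat.eq_zero_or_pos N with hN | hN
  · -- constant terms
    subst hN
    have hsig : CtAux.sig 3 0 = 0 := by simp [CtAux.sig]
    rw [hsig]
    have h3 : PowerSeries.coeff 0 (Eis 3) = -(1/42) / 12 := by
      rw [Eis, PowerSeries.coeff_mk, if_pos rfl]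
      norm_num [hb6]
    have h2 : PowerSeries.coeff 0 (Eis 2) = 1/240 := by
      rw [Eis, PowerSeries.coeff_mk, if_pos rfl]
      norm_num [hb4]
    have h1 : PowerSeries.coeff 0 (Eis 1) = -(1/24) := by
      rw [Eis, PowerSeries.coeff_mk, if_pos rfl]
      norm_num [hb2]
    have hmul : PowerSeries.coeff 0 (Eis 2 * Eis 1)
        = PowerSeries.coeff 0 (Eis 2) * PowerSeries.coeff 0 (Eis 1) := by
      rw [PowerSeries.coeff_mul]
      simp
    rw [hmul, h3, h2, h1]
    norm_num
  · -- positive coefficients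
    have hN0 : N ≠ 0 := by omega
    have h3 : PowerSeries.coeff N (Eis 3) = CtAux.sig 5 N := by
      rw [Eis, PowerSeries.coeff_mk, if_neg hN0, CtAux.sig]
    have hmul : PowerSeries.coeff N (Eis 2 * Eis 1)
        = (1/240) * CtAux.sig 1 N + (∑ k ∈ Finset.Ico 1 N, CtAux.sig 3 k * CtAux.sig 1 (N - k))
          + CtAux.sig 3 N * (-(1/24)) := by
      rw [PowerSeries.coeff_mul, Finset.Nat.sum_antidiagonal_eq_sum_range_succ_mk]
      rw [Finset.range_eq_Ico, Finset.sum_eq_sum_Ico_succ_bot (by omega : 0 < N + 1),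
        Finset.sum_Ico_succ_top (by omega : 1 ≤ N)]
      have e20 : PowerSeries.coeff 0 (Eis 2) = 1/240 := by
        rw [Eis, PowerSeries.coeff_mk, if_pos rfl]; norm_num [hb4]
      have e10 : PowerSeries.coeff (N - N) (Eis 1) = -(1/24) := by
        rw [Nat.sub_self, Eis, PowerSeries.coeff_mk, if_pos rfl]; norm_num [hb2]
      have e1N : PowerSeries.coeff (N - 0) (Eis 1) = CtAux.sig 1 N := by
        rw [Nat.sub_zero, Eis, PowerSeries.coeff_mk, if_neg hN0, CtAux.sig]
      have e2N : PowerSeries.coeff N (Eis 2) = CtAux.sig 3 N := by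
        rw [Eis, PowerSeries.coeff_mk, if_neg hN0, CtAux.sig]
      have hmid : ∀ k ∈ Finset.Ico 1 N,
          PowerSeries.coeff k (Eis 2) * PowerSeries.coeff (N - k) (Eis 1)
            = CtAux.sig 3 k * CtAux.sig 1 (N - k) := by
        intro k hk
        rw [Finset.mem_Ico] at hk
        have hk0 : k ≠ 0 := by omega
        have hnk0 : N - k ≠ 0 := by omega
        rw [Eis, Eis, PowerSeries.coeff_mk, PowerSeries.coeff_mk, if_neg hk0, if_neg hnk0,
          CtAux.sig, CtAux.sig]
      rw [e20, e10, e1N, e2N, Finset.sum_congr rfl hmid]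
      ring
    have hconv : ∑ k ∈ Finset.Ico 1 N, CtAux.sig 3 k * CtAux.sig 1 (N - k)
        = (21 * CtAux.sig 5 N + 10 * CtAux.sig 3 N - 30 * N * CtAux.sig 3 N
            - CtAux.sig 1 N) / 240 := by
      rw [← CtAux.T31_conv, CtAux.T31_eval]
    rw [h3, hmul, hconv]
    simp only [smul_eq_mul]
    ring

end
end
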